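/- arXiv:2009.09148 — 4 statements merged into one kernel-verified Lean document; each statement's English description precedes it below -/
import Mathlib

section
/- Let F be a probability distribution on [0,∞) with first moment m₁ = ∫₀^∞ x dF(x) and second moment m₂ = ∫₀^∞ x² dF(x), and suppose 0 < m₂ < ∞. Then the Laplace–Stieltjes transform of F satisfies, for all s ≥ 0, F̂(s) ≤ 1 − m₁²/m₂ + (m₁²/m₂)·e^{−(m₂/m₁)s}. -/
open MeasureTheory

section Aux
open Real

/-- Pointwise quadratic majorant of `exp (-(s*x))` for `x ≥ 0`, tangent at `b`,
equal at `0`. -/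
lemma exp_le_quad {s b : ℝ} (hs : 0 < s) (hb : 0 < b) :
    ∀ x : ℝ, 0 ≤ x →
      Real.exp (-(s * x)) ≤
        1 + ((2 * Real.exp (-(s * b)) - 2 + s * b * Real.exp (-(s * b))) / b) * x
          + ((1 - Real.exp (-(s * b)) - s * b * Real.exp (-(s * b))) / b ^ 2) * x ^ 2 := by
  set E := Real.exp (-(s * b)) with hEdef
  have hEpos : 0 < E := Real.exp_pos _
  have hEmul : E * Real.exp (s * b) = 1 := by
    rw [hEdef, ← Real.exp_add]; simp
  have hexppos : 0 < Real.exp (s * b) := Real.exp_pos _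
  set B : ℝ := (2 * E - 2 + s * b * E) / b with hBdef
  set C : ℝ := (1 - E - s * b * E) / b ^ 2 with hCdef
  have hsb : 0 < s * b := mul_pos hs hb
  have hC : 0 < C := by
    have h1 : s * b + 1 < Real.exp (s * b) := Real.add_one_lt_exp (ne_of_gt hsb)
    rw [hCdef]
    apply div_pos _ (by positivity)
    nlinarith
  -- the functions
  set h : ℝ → ℝ := fun y => 1 + B * y + C * y ^ 2 - Real.exp (-(s * y)) with hhdef
  set h1 : ℝ → ℝ := fun y => B + 2 * C * y + s * Real.exp (-(s * y)) with hh1def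
  -- derivatives
  have dexp : ∀ y : ℝ, HasDerivAt (fun z => Real.exp (-(s * z))) (-s * Real.exp (-(s * y))) y := by
    intro y
    have h0 : HasDerivAt (fun z : ℝ => -(s * z)) (-s) y := by
      simpa using ((hasDerivAt_id y).const_mul (-s))
    simpa [mul_comm] using h0.exp
  have hd : ∀ y : ℝ, HasDerivAt h (h1 y) y := by
    intro y
    have hpoly : HasDerivAt (fun y : ℝ => 1 + B * y + C * y ^ 2) (B + 2 * C * y) y := by
      have hB' : HasDerivAt (fun y : ℝ => 1 + B * y) B y := by
        simpa using ((hasDerivAt_id y).const_mul B).const_add 1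
      have hC' : HasDerivAt (fun y : ℝ => C * y ^ 2) (C * (2 * y)) y := by
        simpa using (hasDerivAt_pow 2 y).const_mul C
      exact (hB'.add hC').congr_deriv (by ring)
    have := hpoly.sub (dexp y)
    exact this.congr_deriv (by simp only [hh1def]; ring)
  have hd1 : ∀ y : ℝ, HasDerivAt h1 (2 * C - s ^ 2 * Real.exp (-(s * y))) y := by
    intro y
    have hB' : HasDerivAt (fun y : ℝ => B + 2 * C * y) (2 * C) y := by
      simpa using ((hasDerivAt_id y).const_mul (2 * C)).const_add B
    have := hB'.add ((dexp y).const_mul s)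
    exact this.congr_deriv (by ring)
  -- values at 0 and b
  have hh0 : h 0 = 0 := by simp [hhdef]
  have hhb : h b = 0 := by
    rw [hhdef]
    simp only
    rw [hBdef, hCdef, ← hEdef]
    field_simp
    ring
  have hh1b : h1 b = 0 := by
    rw [hh1def]
    simp only
    rw [hBdef, hCdef, ← hEdef]
    field_simp
    ring
  -- the threshold w where h'' changes sign
  set w : ℝ := -(Real.log (2 * C / s ^ 2)) / s with hwdef
  have hCs : 0 < 2 * C / s ^ 2 := by positivity
  have hiff : ∀ y : ℝ, w ≤ y ↔ Real.exp (-(s * y)) ≤ 2 * C / s ^ 2 := by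
    intro y
    rw [← Real.le_log_iff_exp_le hCs, hwdef]
    rw [div_le_iff₀ hs] -- -(log ...) / s ≤ y ↔ -(log ...) ≤ y * s
    constructor
    · intro hxy; nlinarith
    · intro hxy; nlinarith
  have hh2b : 0 ≤ 2 * C - s ^ 2 * E := by
    have hq : 1 + s * b + (s * b) ^ 2 / 2 ≤ Real.exp (s * b) := Real.quadratic_le_exp_of_nonneg hsb.le
    rw [hCdef]
    have hb2 : (0:ℝ) < b ^ 2 := by positivity
    have : 2 * ((1 - E - s * b * E) / b ^ 2) - s ^ 2 * E
        = (2 - E * (2 + 2 * (s * b) + (s * b) ^ 2)) / b ^ 2 := by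
      field_simp; ring
    rw [this]
    apply div_nonneg _ hb2.le
    nlinarith [mul_le_mul_of_nonneg_left hq hEpos.le, hEmul]
  have hwb : w ≤ b := by
    rw [hiff b, ← hEdef, le_div_iff₀ (by positivity)]
    nlinarith
  -- h1 is monotone on [w, ∞)
  have hmono1 : MonotoneOn h1 (Set.Ici w) := by
    apply monotoneOn_of_deriv_nonneg (convex_Ici w)
      (fun y _ => (hd1 y).continuousAt.continuousWithinAt)
      (fun y _ => (hd1 y).differentiableAt.differentiableWithinAt)
    intro y hy
    rw [interior_Ici] at hy
    rw [(hd1 y).deriv]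
    have := (hiff y).mp (le_of_lt hy)
    rw [le_div_iff₀ (by positivity)] at this
    nlinarith
  -- h is nonneg on [w, ∞)
  have hnn1 : ∀ y : ℝ, w ≤ y → 0 ≤ h y := by
    intro y hy
    rcases le_total y b with hyb | hby
    · -- h antitone on [w, b]
      have hanti : AntitoneOn h (Set.Icc w b) := by
        apply antitoneOn_of_deriv_nonpos (convex_Icc w b)
          (fun z _ => (hd z).continuousAt.continuousWithinAt)
          (fun z _ => (hd z).differentiableAt.differentiableWithinAt)
        intro z hz
        rw [interior_Icc] at hz
        rw [(hd z).deriv]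
        have := hmono1 (Set.mem_Ici.mpr hz.1.le) (Set.mem_Ici.mpr hwb) hz.2.le
        rw [hh1b] at this
        exact this
      have := hanti (Set.mem_Icc.mpr ⟨hy, hyb⟩) (Set.mem_Icc.mpr ⟨hwb, le_refl b⟩) hyb
      rw [hhb] at this
      exact this
    · -- h monotone on [b, ∞)
      have hmonoh : MonotoneOn h (Set.Ici b) := by
        apply monotoneOn_of_deriv_nonneg (convex_Ici b)
          (fun z _ => (hd z).continuousAt.continuousWithinAt)
          (fun z _ => (hd z).differentiableAt.differentiableWithinAt)
        intro z hz
        rw [interior_Ici] at hz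
        rw [(hd z).deriv]
        have := hmono1 (Set.mem_Ici.mpr hwb) (Set.mem_Ici.mpr (hwb.trans hz.le)) hz.le
        rw [hh1b] at this
        exact this
      have := hmonoh (Set.mem_Ici.mpr (le_refl b)) (Set.mem_Ici.mpr hby) hby
      rw [hhb] at this
      exact this
  -- main: 0 ≤ h x for x ≥ 0
  have hmain : ∀ x : ℝ, 0 ≤ x → 0 ≤ h x := by
    intro x hx
    rcases le_or_gt w x with hwx | hxw
    · exact hnn1 x hwx
    · -- 0 ≤ x < w : use concavity of h on [0, w]
      have hw0 : 0 < w := lt_of_le_of_lt hx hxw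
      have hconc : ConcaveOn ℝ (Set.Icc 0 w) h := by
        apply concaveOn_of_hasDerivWithinAt2_nonpos (convex_Icc 0 w)
          (f' := h1) (f'' := fun y => 2 * C - s ^ 2 * Real.exp (-(s * y)))
          (fun y _ => (hd y).continuousAt.continuousWithinAt)
          (fun y _ => (hd y).hasDerivWithinAt)
          (fun y _ => (hd1 y).hasDerivWithinAt)
        intro y hy
        rw [interior_Icc] at hy
        have : ¬ (w ≤ y) := not_le.mpr hy.2
        rw [hiff y] at this
        push_neg at this
        rw [div_lt_iff₀ (by positivity)] at this
        nlinarith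
      have h0mem : (0:ℝ) ∈ Set.Icc (0:ℝ) w := Set.mem_Icc.mpr ⟨le_refl 0, hw0.le⟩
      have hwmem : w ∈ Set.Icc (0:ℝ) w := Set.mem_Icc.mpr ⟨hw0.le, le_refl w⟩
      have ht0 : 0 ≤ 1 - x / w := by
        rw [sub_nonneg, div_le_one hw0]
        exact hxw.le
      have ht1 : 0 ≤ x / w := div_nonneg hx hw0.le
      have hsum : (1 - x / w) + x / w = 1 := by ring
      have := hconc.2 h0mem hwmem ht0 ht1 hsum
      have hx' : (1 - x / w) • (0:ℝ) + (x / w) • w = x := by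
        simp only [smul_eq_mul]
        field_simp
        ring
      rw [hx', hh0] at this
      have hhw : 0 ≤ h w := hnn1 w (le_refl w)
      simp only [smul_eq_mul] at this
      calc (0:ℝ) ≤ x / w * h w := mul_nonneg ht1 hhw
        _ = (1 - x / w) * 0 + x / w * h w := by ring
        _ ≤ h x := this
  intro x hx
  have := hmain x hx
  rw [hhdef] at this
  simp only at this
  linarith

end Aux

/-- Laplace–Stieltjes transform of a (nonnegative) probability distribution. -/
noncomputable def LS (F : Measure ℝ) (s : ℝ) : ℝ := ∫ x, Real.exp (-(s * x)) ∂F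

/-- Lemma 5: for a probability distribution `F` on `[0,∞)` with moments
`m₁ = ∫ x dF`, `m₂ = ∫ x² dF`, `0 < m₂ < ∞`, the LS-transform satisfies
`F̂(s) ≤ 1 − m₁²/m₂ + (m₁²/m₂) e^{−(m₂/m₁)s}` for all `s ≥ 0`. -/
theorem stmt11 (F : Measure ℝ) [IsProbabilityMeasure F] (hF : F (Set.Iio 0) = 0)
    (hint : Integrable (fun x => x ^ 2) F) (hpos : 0 < ∫ x, x ^ 2 ∂F) :
    ∀ s : ℝ, 0 ≤ s →
      LS F s ≤ 1 - (∫ x, x ∂F) ^ 2 / (∫ x, x ^ 2 ∂F) +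
        (∫ x, x ∂F) ^ 2 / (∫ x, x ^ 2 ∂F) *
          Real.exp (-((∫ x, x ^ 2 ∂F) / (∫ x, x ∂F) * s)) := by
  intro s hs
  set m1 : ℝ := ∫ x, x ∂F with hm1
  set m2 : ℝ := ∫ x, x ^ 2 ∂F with hm2
  -- a.e. nonnegativity
  have hae : ∀ᵐ x ∂F, 0 ≤ x := by
    rw [MeasureTheory.ae_iff]
    convert hF using 2
    ext x
    simp [Set.Iio, not_le]
  -- integrability of x
  have hintx : Integrable (fun x : ℝ => x) F := by
    apply (hint.add (integrable_const 1)).mono' measurable_id.aestronglyMeasurable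
    refine Filter.Eventually.of_forall (fun x => ?_)
    simp only [Pi.add_apply, Real.norm_eq_abs, id_eq]
    nlinarith [sq_nonneg (|x| - 1), sq_abs x, abs_nonneg x]
  -- m1 > 0
  have hm1nonneg : 0 ≤ m1 := integral_nonneg_of_ae hae
  have hm1pos : 0 < m1 := by
    rcases hm1nonneg.lt_or_eq with h | h
    · exact h
    · exfalso
      have hz : (fun x : ℝ => x) =ᵐ[F] 0 :=
        (integral_eq_zero_iff_of_nonneg_ae hae hintx).mp h.symm
      have hz2 : (fun x : ℝ => x ^ 2) =ᵐ[F] 0 := by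
        filter_upwards [hz] with x hx
        simp only [Pi.zero_apply] at hx ⊢
        rw [hx]; ring
      have : m2 = 0 := by
        rw [hm2, integral_congr_ae hz2]; simp
      rw [this] at hpos
      exact lt_irrefl 0 hpos
  have hm2pos : 0 < m2 := hpos
  -- case s = 0
  rcases hs.lt_or_eq with hs | hs
  swap
  · rw [← hs]
    simp only [LS, zero_mul, neg_zero, Real.exp_zero, mul_zero, mul_one]
    rw [integral_const]
    simp
  -- s > 0
  set b : ℝ := m2 / m1 with hbdef
  have hb : 0 < b := div_pos hm2pos hm1pos
  set E : ℝ := Real.exp (-(s * b)) with hEdef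
  set B : ℝ := (2 * E - 2 + s * b * E) / b with hBdef
  set C : ℝ := (1 - E - s * b * E) / b ^ 2 with hCdef
  -- integrability of the exponential
  have hexpint : Integrable (fun x : ℝ => Real.exp (-(s * x))) F := by
    apply (integrable_const (1:ℝ)).mono'
      (Real.continuous_exp.comp (continuous_const.mul continuous_id).neg).aestronglyMeasurable
    filter_upwards [hae] with x hx
    simp only [Function.comp_apply, Pi.neg_apply, Pi.mul_apply, id_eq, Real.norm_eq_abs, Real.abs_exp]
    exact Real.exp_le_one_iff.mpr (by nlinarith)
  -- the quadratic is integrable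
  have hquadint : Integrable (fun x : ℝ => 1 + B * x + C * x ^ 2) F :=
    ((integrable_const (1:ℝ)).add (hintx.const_mul B)).add (hint.const_mul C)
  -- pointwise comparison
  have hcomp : LS F s ≤ ∫ x, (1 + B * x + C * x ^ 2) ∂F := by
    apply integral_mono_ae hexpint hquadint
    filter_upwards [hae] with x hx
    exact exp_le_quad hs hb x hx
  -- compute the integral of the quadratic
  have hBx : Integrable (fun x : ℝ => B * x) F := hintx.const_mul B
  have hCx : Integrable (fun x : ℝ => C * x ^ 2) F := hint.const_mul C
  have h1B : Integrable (fun x : ℝ => 1 + B * x) F := (integrable_const 1).add hBx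
  have hval : ∫ x, (1 + B * x + C * x ^ 2) ∂F = 1 + B * m1 + C * m2 := by
    rw [integral_add h1B hCx, integral_add (integrable_const (1:ℝ)) hBx,
        integral_const, integral_const_mul, integral_const_mul]
    simp [hm1, hm2]
  -- final algebra
  have hfinal : 1 + B * m1 + C * m2
      = 1 - m1 ^ 2 / m2 + m1 ^ 2 / m2 * Real.exp (-(m2 / m1 * s)) := by
    have hsb : s * b = m2 / m1 * s := by rw [hbdef]; ring
    rw [hBdef, hCdef, hEdef, hsb, hbdef]
    have h1 : m1 ≠ 0 := ne_of_gt hm1pos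
    have h2 : m2 ≠ 0 := ne_of_gt hm2pos
    field_simp
    ring
  calc LS F s ≤ ∫ x, (1 + B * x + C * x ^ 2) ∂F := hcomp
    _ = 1 + B * m1 + C * m2 := hval
    _ = _ := hfinal
end

section
/- Let F_{W₁} and F_{W₂} be probability distributions on [0,∞) with the same mean μ_W ∈ (0,∞), and let F_{Z*} be a probability distribution on [0,∞) whose mean μ_{Z*} satisfies 0 < μ_{Z*} < 1. Assume the Laplace–Stieltjes transforms satisfy |F̂_{W₁}(s) − F̂_{W₂}(s)| ≤ ∫₀^∞ |F̂_{W₁}(ts) − F̂_{W₂}(ts)| dF_{Z*}(t) for all s ≥ 0. Then F̂_{W₁} = F̂_{W₂} and hence F_{W₁} = F_{W₂}. -/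
open MeasureTheory
open scoped ENNReal NNReal

lemma ae_nonneg_of_Iio (F : Measure ℝ) (h : F (Set.Iio 0) = 0) : ∀ᵐ x ∂F, (0:ℝ) ≤ x := by
  rw [ae_iff]; simpa [Set.Iio, not_le] using h

lemma exp_integrable (F : Measure ℝ) [IsProbabilityMeasure F] (h : F (Set.Iio 0) = 0)
    {s : ℝ} (hs : 0 ≤ s) : Integrable (fun x => Real.exp (-(s*x))) F := by
  refine (integrable_const (1:ℝ)).mono' ?_ ?_
  · exact (Real.continuous_exp.comp (continuous_const.mul continuous_id).neg).aestronglyMeasurable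
  · filter_upwards [ae_nonneg_of_Iio F h] with x hx
    rw [Real.norm_eq_abs, abs_of_pos (Real.exp_pos _)]
    exact Real.exp_le_one_iff.mpr (neg_nonpos.mpr (mul_nonneg hs hx))

lemma LS_decomp (F : Measure ℝ) [IsProbabilityMeasure F] (h : F (Set.Iio 0) = 0)
    (hi : Integrable (fun x => x) F) {s : ℝ} (hs : 0 ≤ s) :
    0 ≤ LS F s - (1 - s * ∫ x, x ∂F) ∧ LS F s - (1 - s * ∫ x, x ∂F) ≤ s * ∫ x, x ∂F := by
  have hexp := exp_integrable F h hs
  have hsx : Integrable (fun x => s * x) F := hi.const_mul s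
  have key : LS F s - (1 - s * ∫ x, x ∂F) = ∫ x, (Real.exp (-(s*x)) - 1 + s*x) ∂F := by
    have e1 : ∫ x, (Real.exp (-(s*x)) - 1 + s*x) ∂F
        = (∫ x, (Real.exp (-(s*x)) - 1) ∂F) + ∫ x, s*x ∂F :=
      integral_add (hexp.sub (integrable_const 1)) hsx
    rw [e1, integral_sub hexp (integrable_const 1), integral_const, integral_const_mul]
    simp [LS]
    ring
  constructor
  · rw [key]
    apply integral_nonneg
    intro x
    have := Real.add_one_le_exp (-(s*x))
    simp only [Pi.zero_apply]
    linarith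
  · rw [key]
    calc ∫ x, (Real.exp (-(s*x)) - 1 + s*x) ∂F ≤ ∫ x, s*x ∂F := by
          refine integral_mono_ae ((hexp.sub (integrable_const 1)).add hsx) hsx ?_
          filter_upwards [ae_nonneg_of_Iio F h] with x hx
          have : Real.exp (-(s*x)) ≤ 1 := Real.exp_le_one_iff.mpr (neg_nonpos.mpr (mul_nonneg hs hx))
          linarith
      _ = s * ∫ x, x ∂F := integral_const_mul s _

lemma LS_zero (F : Measure ℝ) [IsProbabilityMeasure F] : LS F 0 = 1 := by
  simp [LS]

section Unique

abbrev Ω01 : Type := Set.Icc (0:ℝ) 1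

noncomputable def emap (x : ℝ) : Ω01 :=
  ⟨Real.exp (-|x|), ⟨(Real.exp_pos _).le, Real.exp_le_one_iff.mpr (neg_nonpos.mpr (abs_nonneg x))⟩⟩

lemma continuous_emap : Continuous emap :=
  Continuous.subtype_mk (Real.continuous_exp.comp continuous_abs.neg) _

-- integrability of continuous functions on Ω01
lemma cont_integrable (μ : Measure Ω01) [IsFiniteMeasure μ] (f : C(Ω01, ℝ)) :
    Integrable (fun y => f y) μ :=
  (BoundedContinuousFunction.mkOfCompact f).integrable μ

lemma cont_integrable' (μ : Measure Ω01) [IsFiniteMeasure μ] {g : Ω01 → ℝ}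
    (hg : Continuous g) : Integrable g μ :=
  (BoundedContinuousFunction.mkOfCompact ⟨g, hg⟩).integrable μ

lemma moment_eq (F : Measure ℝ) [IsProbabilityMeasure F] (h : F (Set.Iio 0) = 0) (n : ℕ) :
    ∫ y : Ω01, ((y : ℝ))^n ∂(F.map emap) = LS F n := by
  rw [integral_map (f := fun y : Ω01 => (y:ℝ)^n) continuous_emap.measurable.aemeasurable
    ((continuous_subtype_val.pow n).aestronglyMeasurable)]
  refine integral_congr_ae ?_
  filter_upwards [ae_nonneg_of_Iio F h] with x hx
  simp only [emap, ← Real.exp_nat_mul]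
  rw [abs_of_nonneg hx]
  ring_nf

lemma measure_eq_of_LS_nat_eq (F1 F2 : Measure ℝ)
    [IsProbabilityMeasure F1] [IsProbabilityMeasure F2]
    (h1 : F1 (Set.Iio 0) = 0) (h2 : F2 (Set.Iio 0) = 0)
    (h : ∀ n : ℕ, LS F1 (n:ℝ) = LS F2 (n:ℝ)) : F1 = F2 := by
  set μ1 : Measure Ω01 := F1.map emap with hμ1
  set μ2 : Measure Ω01 := F2.map emap with hμ2
  have hp1 : IsProbabilityMeasure μ1 := Measure.isProbabilityMeasure_map continuous_emap.measurable.aemeasurable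
  have hp2 : IsProbabilityMeasure μ2 := Measure.isProbabilityMeasure_map continuous_emap.measurable.aemeasurable
  -- moments agree
  have hmom : ∀ n : ℕ, ∫ y : Ω01, ((y:ℝ))^n ∂μ1 = ∫ y : Ω01, ((y:ℝ))^n ∂μ2 := by
    intro n; rw [hμ1, hμ2, moment_eq F1 h1, moment_eq F2 h2, h n]
  -- polynomials agree
  have hpoly : ∀ p : Polynomial ℝ, ∫ y : Ω01, p.eval (y:ℝ) ∂μ1 = ∫ y : Ω01, p.eval (y:ℝ) ∂μ2 := by
    intro p
    induction p using Polynomial.induction_on' with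
    | add p q hp hq =>
        have ip1 := cont_integrable μ1 (p.toContinuousMapOn (Set.Icc 0 1))
        have iq1 := cont_integrable μ1 (q.toContinuousMapOn (Set.Icc 0 1))
        have ip2 := cont_integrable μ2 (p.toContinuousMapOn (Set.Icc 0 1))
        have iq2 := cont_integrable μ2 (q.toContinuousMapOn (Set.Icc 0 1))
        simp only [Polynomial.toContinuousMapOn, Polynomial.toContinuousMap,
          ContinuousMap.coe_mk] at ip1 iq1 ip2 iq2
        simp only [Polynomial.eval_add]
        rw [integral_add ip1 iq1, integral_add ip2 iq2, hp, hq]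
    | monomial n a =>
        simp only [Polynomial.eval_monomial]
        rw [integral_const_mul, integral_const_mul, hmom n]
  -- continuous functions agree
  have hcont : ∀ f : C(Ω01, ℝ), ∫ y, f y ∂μ1 = ∫ y, f y ∂μ2 := by
    intro f
    have key : ∀ ε : ℝ, 0 < ε → |(∫ y, f y ∂μ1) - ∫ y, f y ∂μ2| ≤ ε := by
      intro ε hε
      obtain ⟨p, hpf⟩ := exists_polynomial_near_continuousMap 0 1 f (ε/2) (by linarith)
      have hbound : ∀ (μ : Measure Ω01), IsProbabilityMeasure μ →
          |(∫ y, f y ∂μ) - ∫ y : Ω01, p.eval (y:ℝ) ∂μ| ≤ ε/2 := by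
        intro μ hμ
        have hint : Integrable (fun y => f y) μ := cont_integrable μ f
        have hintp : Integrable (fun y : Ω01 => p.eval (y:ℝ)) μ := by
          have := cont_integrable μ (p.toContinuousMapOn (Set.Icc 0 1))
          simpa [Polynomial.toContinuousMapOn, Polynomial.toContinuousMap] using this
        rw [← integral_sub hint hintp]
        calc |∫ y : Ω01, (f y - p.eval (y:ℝ)) ∂μ| ≤ ∫ y : Ω01, |f y - p.eval (y:ℝ)| ∂μ :=
              by simpa [Real.norm_eq_abs] using
                norm_integral_le_integral_norm (fun y : Ω01 => f y - p.eval (y:ℝ))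
          _ ≤ ∫ _ : Ω01, (ε/2) ∂μ := by
              refine integral_mono (hint.sub hintp).abs (integrable_const _) ?_
              intro y
              show |f y - Polynomial.eval (↑y) p| ≤ ε/2
              have hy := (p.toContinuousMapOn (Set.Icc 0 1) - f).norm_coe_le_norm y
              simp only [ContinuousMap.sub_apply, Polynomial.toContinuousMapOn,
                Polynomial.toContinuousMap, ContinuousMap.coe_mk, Real.norm_eq_abs] at hy
              rw [abs_sub_comm]
              exact hy.trans hpf.le
          _ = ε/2 := by simp
      have b1 := hbound μ1 hp1
      have b2 := hbound μ2 hp2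
      rw [hpoly p] at b1
      calc |(∫ y, f y ∂μ1) - ∫ y, f y ∂μ2|
          ≤ |(∫ y, f y ∂μ1) - ∫ y : Ω01, p.eval (y:ℝ) ∂μ2|
            + |(∫ y : Ω01, p.eval (y:ℝ) ∂μ2) - ∫ y, f y ∂μ2| := abs_sub_le _ _ _
        _ ≤ ε/2 + ε/2 := by rw [abs_sub_comm (∫ y : Ω01, p.eval (y:ℝ) ∂μ2)]; exact add_le_add b1 b2
        _ = ε := by ring
    by_contra hne
    have : 0 < |(∫ y, f y ∂μ1) - ∫ y, f y ∂μ2| := abs_pos.mpr (sub_ne_zero.mpr hne)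
    linarith [key (|(∫ y, f y ∂μ1) - ∫ y, f y ∂μ2| / 2) (by linarith)]
  -- measures agree
  have hcont' : ∀ {g : Ω01 → ℝ}, Continuous g → ∫ y, g y ∂μ1 = ∫ y, g y ∂μ2 := by
    intro g hg
    exact hcont ⟨g, hg⟩
  have hμeq : μ1 = μ2 := by
    refine ext_of_forall_lintegral_eq_of_IsFiniteMeasure ?_
    intro f
    have hg : Continuous (fun y : Ω01 => (f y : ℝ)) := NNReal.continuous_coe.comp f.continuous
    calc ∫⁻ y, (f y : ℝ≥0∞) ∂μ1
        = ∫⁻ y, ENNReal.ofReal ((f y : ℝ)) ∂μ1 := by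
          simp [ENNReal.ofReal_coe_nnreal]
      _ = ENNReal.ofReal (∫ y, ((f y : ℝ)) ∂μ1) :=
          (ofReal_integral_eq_lintegral_ofReal (cont_integrable' μ1 hg)
            (Filter.Eventually.of_forall fun y => (f y).coe_nonneg)).symm
      _ = ENNReal.ofReal (∫ y, ((f y : ℝ)) ∂μ2) := by rw [hcont' hg]
      _ = ∫⁻ y, ENNReal.ofReal ((f y : ℝ)) ∂μ2 :=
          ofReal_integral_eq_lintegral_ofReal (cont_integrable' μ2 hg)
            (Filter.Eventually.of_forall fun y => (f y).coe_nonneg)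
      _ = ∫⁻ y, (f y : ℝ≥0∞) ∂μ2 := by
          simp [ENNReal.ofReal_coe_nnreal]
  -- recover original measures
  have hrec : ∀ (F : Measure ℝ), IsProbabilityMeasure F → F (Set.Iio 0) = 0 →
      (F.map emap).map (fun y : Ω01 => -Real.log (y:ℝ)) = F := by
    intro F _ hF
    have hmg : Measurable (fun y : Ω01 => -Real.log (y:ℝ)) :=
      (Real.measurable_log.comp measurable_subtype_coe).neg
    rw [Measure.map_map hmg continuous_emap.measurable]
    have : (fun y : Ω01 => -Real.log (y:ℝ)) ∘ emap = fun x => |x| := by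
      funext x; simp [emap, Real.log_exp]
    rw [this]
    have : (fun x : ℝ => |x|) =ᵐ[F] id := by
      filter_upwards [ae_nonneg_of_Iio F hF] with x hx
      simp [abs_of_nonneg hx]
    rw [Measure.map_congr this, Measure.map_id]
  calc F1 = (F1.map emap).map (fun y : Ω01 => -Real.log (y:ℝ)) := (hrec F1 ‹_› h1).symm
    _ = (F2.map emap).map (fun y : Ω01 => -Real.log (y:ℝ)) := by rw [← hμ1, ← hμ2, hμeq]
    _ = F2 := hrec F2 ‹_› h2

end Unique

/-- Lemma 10: if `F_{W₁}, F_{W₂}` are probability distributions on `[0,∞)` with the same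
mean `μ_W ∈ (0,∞)`, `F_{Z*}` is a probability distribution on `[0,∞)` with mean in
`(0,1)`, and `|F̂_{W₁}(s) − F̂_{W₂}(s)| ≤ ∫₀^∞ |F̂_{W₁}(ts) − F̂_{W₂}(ts)| dF_{Z*}(t)`
for all `s ≥ 0`, then `F̂_{W₁} = F̂_{W₂}` and hence `F_{W₁} = F_{W₂}`. -/
theorem stmt16 (FW1 FW2 FZ : Measure ℝ)
    [IsProbabilityMeasure FW1] [IsProbabilityMeasure FW2] [IsProbabilityMeasure FZ]
    (h1 : FW1 (Set.Iio 0) = 0) (h2 : FW2 (Set.Iio 0) = 0) (hz : FZ (Set.Iio 0) = 0)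
    (μW : ℝ) (hμW : 0 < μW)
    (hi1 : Integrable (fun x => x) FW1) (hi2 : Integrable (fun x => x) FW2)
    (hm1 : (∫ x, x ∂FW1) = μW) (hm2 : (∫ x, x ∂FW2) = μW)
    (hiz : Integrable (fun t => t) FZ) (hz0 : 0 < ∫ t, t ∂FZ) (hz1 : (∫ t, t ∂FZ) < 1)
    (hineq : ∀ s : ℝ, 0 ≤ s →
      |LS FW1 s - LS FW2 s| ≤ ∫ t, |LS FW1 (t * s) - LS FW2 (t * s)| ∂FZ) :
    (∀ s : ℝ, LS FW1 s = LS FW2 s) ∧ FW1 = FW2 := by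
  set ρ := ∫ t, t ∂FZ with hρ
  set D : ℝ → ℝ := fun s => |LS FW1 s - LS FW2 s| with hD
  -- Step 1 : key bound
  have key : ∀ s : ℝ, 0 ≤ s → D s ≤ μW * s := by
    intro s hs
    obtain ⟨l1, u1⟩ := LS_decomp FW1 h1 hi1 hs
    obtain ⟨l2, u2⟩ := LS_decomp FW2 h2 hi2 hs
    rw [hm1] at l1 u1; rw [hm2] at l2 u2
    simp only [hD]
    rw [abs_sub_le_iff]
    constructor <;> nlinarith
  have D0 : D 0 = 0 := by simp [hD, LS_zero]
  have Dnonneg : ∀ s, 0 ≤ D s := fun s => abs_nonneg _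
  -- Step 3 : sup
  set S : Set ℝ := (fun s => D s / s) '' Set.Ioi 0 with hS
  have hbdd : BddAbove S := by
    refine ⟨μW, ?_⟩
    rintro y ⟨s, hs, rfl⟩
    rw [Set.mem_Ioi] at hs
    rw [div_le_iff₀ hs]
    calc D s ≤ μW * s := key s hs.le
      _ = μW * s := rfl
  have hmem : ∀ s : ℝ, 0 < s → D s / s ∈ S := fun s hs => ⟨s, hs, rfl⟩
  have hne : S.Nonempty := ⟨D 1 / 1, hmem 1 one_pos⟩
  set M := sSup S with hM
  have hM0 : 0 ≤ M := le_trans (by positivity) (le_csSup hbdd (hmem 1 one_pos))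
  have hle : ∀ s : ℝ, 0 < s → D s / s ≤ M := fun s hs => le_csSup hbdd (hmem s hs)
  -- Step 4
  have key2 : ∀ s : ℝ, 0 < s → D s ≤ M * s * ρ := by
    intro s hs
    have step : (∫ t, D (t * s) ∂FZ) ≤ ∫ t, (M * s) * t ∂FZ := by
      refine integral_mono_of_nonneg (Filter.Eventually.of_forall fun t => Dnonneg _)
        (hiz.const_mul (M * s)) ?_
      filter_upwards [ae_nonneg_of_Iio FZ hz] with t ht
      rcases eq_or_lt_of_le ht with h0 | hpos
      · simp [← h0, D0]
      · have := hle (t * s) (mul_pos hpos hs)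
        rw [div_le_iff₀ (mul_pos hpos hs)] at this
        calc D (t * s) ≤ M * (t * s) := this
          _ = M * s * t := by ring
    calc D s ≤ ∫ t, D (t * s) ∂FZ := hineq s hs.le
      _ ≤ ∫ t, (M * s) * t ∂FZ := step
      _ = (M * s) * ρ := integral_const_mul _ _
      _ = M * s * ρ := rfl
  -- Step 5
  have hMle : M ≤ M * ρ := by
    refine csSup_le hne ?_
    rintro y ⟨s, hs, rfl⟩
    rw [Set.mem_Ioi] at hs
    rw [div_le_iff₀ hs]
    calc D s ≤ M * s * ρ := key2 s hs
      _ = M * ρ * s := by ring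
  have hMzero : M = 0 := by nlinarith
  -- Step 6
  have hDzero : ∀ s : ℝ, 0 ≤ s → LS FW1 s = LS FW2 s := by
    intro s hs
    rcases eq_or_lt_of_le hs with h0 | hpos
    · have : D 0 = 0 := D0
      rw [← h0]
      rw [hD] at this
      simpa [abs_eq_zero, sub_eq_zero] using this
    · have h' : D s ≤ 0 := by
        calc D s ≤ M * s * ρ := key2 s hpos
          _ = 0 := by rw [hMzero]; ring
      have : D s = 0 := le_antisymm h' (Dnonneg s)
      rw [hD] at this
      simpa [abs_eq_zero, sub_eq_zero] using this
  have heq : FW1 = FW2 :=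
    measure_eq_of_LS_nat_eq FW1 FW2 h1 h2 fun n => hDzero n (Nat.cast_nonneg n)
  exact ⟨fun s => by rw [heq], heq⟩
end

section
/- Let F be a probability distribution on [0,∞) with mean μ ∈ (0,∞). Then the convolution of F with itself equals the length-biased distribution induced by F (i.e., F ⋆ F = F_Z), if and only if, F is the exponential distribution with mean μ (the distribution with density (1/μ)e^{−x/μ} on [0,∞)). -/
open MeasureTheory

/-- The length-biased distribution induced by `F` with mean `μ`:
`F_Z([0,z]) = (1/μ) ∫₀^z x dF(x)`, i.e. `F` weighted by the density `x/μ`. -/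
noncomputable def lengthBiased (F : Measure ℝ) (μ : ℝ) : Measure ℝ :=
  F.withDensity (fun x => ENNReal.ofReal (x / μ))

/-- The exponential distribution with mean `μ`: density `(1/μ) e^{−x/μ}` on `(0,∞)`. -/
noncomputable def expMeas (μ : ℝ) : Measure ℝ :=
  (volume.restrict (Set.Ioi 0)).withDensity
    (fun x => ENNReal.ofReal ((1 / μ) * Real.exp (-(x / μ))))

open Real Set Filter Topology Polynomial
open scoped ENNReal NNReal


/-- Uniqueness of Laplace transforms for finite measures on `[0,∞)`,
tested at natural-number arguments. -/
theorem laplace_unique (P Q : Measure ℝ) [IsFiniteMeasure P] [IsFiniteMeasure Q]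
    (hP : ∀ᵐ x ∂P, 0 ≤ x) (hQ : ∀ᵐ x ∂Q, 0 ≤ x)
    (h : ∀ n : ℕ, ∫ x, exp (-((n : ℝ) * x)) ∂P = ∫ x, exp (-((n : ℝ) * x)) ∂Q) :
    P = Q := by
  set φ : ℝ → ℝ := fun x => exp (-x) with hφdef
  have hφm : Measurable φ := (measurable_id.neg).exp
  have hφi : Function.Injective φ := fun a b hab => by
    have := Real.exp_injective hab
    linarith [neg_injective this]
  have hemb : MeasurableEmbedding φ := hφm.measurableEmbedding hφi
  set P' := Measure.map φ P with hP'def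
  set Q' := Measure.map φ Q with hQ'def
  haveI : IsFiniteMeasure P' := Measure.isFiniteMeasure_map P φ
  haveI : IsFiniteMeasure Q' := Measure.isFiniteMeasure_map Q φ
  have hsupp : ∀ (R : Measure ℝ), (∀ᵐ x ∂ R, 0 ≤ x) → ∀ᵐ t ∂(Measure.map φ R), t ∈ Icc (0:ℝ) 1 := by
    intro R hR
    refine (ae_map_iff (hφm.aemeasurable (μ := R)) measurableSet_Icc).mpr ?_
    filter_upwards [hR] with x hx
    exact ⟨(exp_pos _).le, exp_le_one_iff.2 (by linarith)⟩
  have hP's : ∀ᵐ t ∂P', t ∈ Icc (0:ℝ) 1 := hsupp P hP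
  have hQ's : ∀ᵐ t ∂Q', t ∈ Icc (0:ℝ) 1 := hsupp Q hQ
  -- integrability of continuous functions against P', Q'
  have hci : ∀ (R : Measure ℝ) [IsFiniteMeasure R], (∀ᵐ t ∂ R, t ∈ Icc (0:ℝ) 1) →
      ∀ g : ℝ → ℝ, Continuous g → Integrable g R := by
    intro R _ hR g hg
    obtain ⟨C, hC⟩ := (isCompact_Icc (a := (0:ℝ)) (b := 1)).exists_bound_of_continuousOn
      hg.continuousOn
    exact (integrable_const C).mono' hg.aestronglyMeasurable
      (hR.mono fun t ht => hC t ht)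
  -- moments agree
  have hmom : ∀ n : ℕ, ∫ t, t ^ n ∂P' = ∫ t, t ^ n ∂Q' := by
    intro n
    rw [hP'def, hQ'def, integral_map hφm.aemeasurable (continuous_pow n).aestronglyMeasurable,
      integral_map hφm.aemeasurable (continuous_pow n).aestronglyMeasurable]
    have : ∀ x : ℝ, φ x ^ n = exp (-((n : ℝ) * x)) := by
      intro x
      rw [hφdef, ← Real.exp_nat_mul]
      ring_nf
    simp_rw [this]
    exact h n
  -- polynomial integrals agree
  have hpoly : ∀ p : ℝ[X], ∫ t, p.eval t ∂P' = ∫ t, p.eval t ∂Q' := by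
    intro p
    have key : ∀ (R : Measure ℝ) [IsFiniteMeasure R], (∀ᵐ t ∂ R, t ∈ Icc (0:ℝ) 1) →
        ∫ t, p.eval t ∂ R = ∑ i ∈ Finset.range (p.natDegree + 1), p.coeff i * ∫ t, t ^ i ∂ R := by
      intro R _ hR
      simp_rw [Polynomial.eval_eq_sum_range (x := _)]
      rw [integral_finset_sum]
      · exact Finset.sum_congr rfl fun i _ => integral_const_mul _ _
      · exact fun i _ => (hci R hR _ (continuous_pow i)).const_mul _
    rw [key P' hP's, key Q' hQ's]
    exact Finset.sum_congr rfl fun i _ => by rw [hmom i]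
  -- main extensionality
  have hPQ' : P' = Q' := by
    apply ext_of_forall_lintegral_eq_of_IsFiniteMeasure
    intro f
    have hfc : Continuous fun t : ℝ => (f t : ℝ) := NNReal.continuous_coe.comp f.continuous
    have hintP : Integrable (fun t => (f t : ℝ)) P' := hci P' hP's _ hfc
    have hintQ : Integrable (fun t => (f t : ℝ)) Q' := hci Q' hQ's _ hfc
    have key : ∫ t, (f t : ℝ) ∂P' = ∫ t, (f t : ℝ) ∂Q' := by
      set c : ℝ := (P' univ).toReal + (Q' univ).toReal with hc
      have hcnn : 0 ≤ c := by positivity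
      have habs : ∀ ε : ℝ, 0 < ε →
          |∫ t, (f t : ℝ) ∂P' - ∫ t, (f t : ℝ) ∂Q'| ≤ ε * c := by
        intro ε hε
        set g : C(Icc (0:ℝ) 1, ℝ) := ⟨fun t => (f t : ℝ), hfc.comp continuous_subtype_val⟩
        obtain ⟨p, hp⟩ := exists_polynomial_near_continuousMap 0 1 g ε hε
        have hp' : ∀ t ∈ Icc (0:ℝ) 1, |(f t : ℝ) - p.eval t| ≤ ε := by
          intro t ht
          have h1 := ContinuousMap.norm_coe_le_norm (p.toContinuousMapOn _ - g) ⟨t, ht⟩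
          have h2 : ‖(p.toContinuousMapOn (Icc (0:ℝ) 1) - g) ⟨t, ht⟩‖ = |p.eval t - (f t : ℝ)| := by
            simp [g, Polynomial.toContinuousMapOn_apply, Polynomial.toContinuousMap_apply,
              Real.norm_eq_abs]
          rw [h2] at h1
          rw [abs_sub_comm]
          exact h1.trans hp.le
        have hdiff : ∀ (R : Measure ℝ) [IsFiniteMeasure R], (∀ᵐ t ∂ R, t ∈ Icc (0:ℝ) 1) →
            Integrable (fun t => (f t : ℝ)) R →
            |∫ t, (f t : ℝ) ∂ R - ∫ t, p.eval t ∂ R| ≤ ε * (R univ).toReal := by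
          intro R _ hR hfi
          have hpi : Integrable (fun t => p.eval t) R := hci R hR _ p.continuous_aeval
          rw [← integral_sub hfi hpi]
          have hb : ∀ᵐ t ∂ R, ‖(f t : ℝ) - p.eval t‖ ≤ ε := by
            filter_upwards [hR] with t ht
            exact hp' t ht
          calc |∫ t, ((f t : ℝ) - p.eval t) ∂ R| ≤ ∫ _, ε ∂ R :=
                norm_integral_le_of_norm_le (integrable_const ε) hb
            _ = (R univ).toReal * ε := by rw [integral_const]; simp [smul_eq_mul, Measure.real]
            _ = ε * (R univ).toReal := mul_comm _ _
        have h1 := hdiff P' hP's hintP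
        have h2 := hdiff Q' hQ's hintQ
        have h3 := hpoly p
        rw [hc]
        have hsplit : ∫ t, (f t : ℝ) ∂P' - ∫ t, (f t : ℝ) ∂Q'
            = (∫ t, (f t : ℝ) ∂P' - ∫ t, p.eval t ∂P')
              + -(∫ t, (f t : ℝ) ∂Q' - ∫ t, p.eval t ∂Q') := by
          rw [h3]; ring
        calc |∫ t, (f t : ℝ) ∂P' - ∫ t, (f t : ℝ) ∂Q'|
            ≤ |∫ t, (f t : ℝ) ∂P' - ∫ t, p.eval t ∂P'|
              + |∫ t, (f t : ℝ) ∂Q' - ∫ t, p.eval t ∂Q'| := by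
              rw [hsplit]
              exact (abs_add_le _ _).trans (by rw [abs_neg])
          _ ≤ ε * (P' univ).toReal + ε * (Q' univ).toReal := add_le_add h1 h2
          _ = ε * ((P' univ).toReal + (Q' univ).toReal) := by ring
      by_contra hne
      have hd : 0 < |∫ t, (f t : ℝ) ∂P' - ∫ t, (f t : ℝ) ∂Q'| := by
        rw [abs_pos, sub_ne_zero]; exact hne
      have := habs (|∫ t, (f t : ℝ) ∂P' - ∫ t, (f t : ℝ) ∂Q'| / (2 * (c + 1))) (by positivity)
      set d := |∫ t, (f t : ℝ) ∂P' - ∫ t, (f t : ℝ) ∂Q'| with hdd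
      have key2 : d / (2 * (c + 1)) * c ≤ d / 2 := by
        rw [div_mul_eq_mul_div, div_le_div_iff₀ (by linarith) (by norm_num)]
        nlinarith
      linarith
    rw [lintegral_coe_eq_integral _ hintP, lintegral_coe_eq_integral _ hintQ, key]
  ext s hs
  have him : MeasurableSet (φ '' s) := hemb.measurableSet_image.2 hs
  have e1 : P s = P' (φ '' s) := by
    rw [hP'def, Measure.map_apply hφm him, Set.preimage_image_eq s hφi]
  have e2 : Q s = Q' (φ '' s) := by
    rw [hQ'def, Measure.map_apply hφm him, Set.preimage_image_eq s hφi]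
  rw [e1, e2, hPQ']


section ExpComp

variable {μ : ℝ}

lemma expMeas_eq_expMeasure (hμ : 0 < μ) :
    expMeas μ = ProbabilityTheory.expMeasure (1 / μ) := by
  rw [expMeas, ProbabilityTheory.expMeasure, ← withDensity_indicator measurableSet_Ioi]
  refine withDensity_congr_ae ?_
  have hne : ∀ᵐ x : ℝ, x ≠ 0 :=
    ae_iff.2 (by simp only [ne_eq, not_not, setOf_eq_eq_singleton, measure_singleton])
  filter_upwards [hne] with x hx
  rw [show ProbabilityTheory.gammaPDF 1 (1 / μ) x = ProbabilityTheory.exponentialPDF (1 / μ) x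
    from rfl]
  rcases lt_trichotomy x 0 with hlt | heq | hgt
  · rw [ProbabilityTheory.exponentialPDF_of_neg hlt, indicator_of_notMem (by simpa using hlt.le)]
  · exact absurd heq hx
  · rw [ProbabilityTheory.exponentialPDF_of_nonneg hgt.le, indicator_of_mem (by simpa using hgt)]
    rw [show x / μ = 1 / μ * x by ring]

instance (priority := 100) : IsProbabilityMeasure (expMeas 1) := by
  rw [expMeas_eq_expMeasure one_pos]
  exact ProbabilityTheory.isProbabilityMeasure_expMeasure (by norm_num)

lemma isProbabilityMeasure_expMeas (hμ : 0 < μ) : IsProbabilityMeasure (expMeas μ) := by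
  rw [expMeas_eq_expMeasure hμ]
  exact ProbabilityTheory.isProbabilityMeasure_expMeasure (by positivity)

lemma expMeas_Iio (hμ : 0 < μ) : expMeas μ (Iio 0) = 0 := by
  rw [expMeas, withDensity_apply _ measurableSet_Iio, Measure.restrict_restrict measurableSet_Iio]
  simp [Iio_inter_Ioi]

lemma integral_expMeas (hμ : 0 < μ) (g : ℝ → ℝ) :
    ∫ x, g x ∂(expMeas μ) = ∫ x in Ioi (0:ℝ), (1 / μ * exp (-(x / μ))) * g x := by
  have hmeas : Measurable fun x : ℝ => (1 / μ * exp (-(x / μ))).toNNReal :=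
    (((measurable_id.div_const μ).neg.exp.const_mul (1 / μ))).real_toNNReal
  rw [expMeas]
  rw [show (fun x : ℝ => ENNReal.ofReal (1 / μ * exp (-(x / μ))))
      = (fun x : ℝ => ((1 / μ * exp (-(x / μ))).toNNReal : ℝ≥0∞)) from rfl]
  rw [integral_withDensity_eq_integral_smul hmeas g]
  refine setIntegral_congr_fun measurableSet_Ioi fun x _ => ?_
  rw [NNReal.smul_def, Real.coe_toNNReal _ (by positivity), smul_eq_mul]

lemma integral_exp_neg_mul_Ioi {c : ℝ} (hc : 0 < c) :
    ∫ x in Ioi (0:ℝ), exp (-(c * x)) = c⁻¹ := by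
  have h := integral_comp_mul_left_Ioi (fun y => exp (-y)) 0 hc
  simp only [mul_zero, smul_eq_mul] at h
  rw [h, integral_exp_neg_Ioi_zero, mul_one]

lemma integral_mul_exp_neg_Ioi : ∫ x in Ioi (0:ℝ), x * exp (-x) = 1 := by
  have h := (Real.Gamma_eq_integral (by norm_num : (0:ℝ) < 2)).symm
  have h2 : Real.Gamma 2 = 1 := by
    rw [show (2:ℝ) = (1:ℕ) + 1 by norm_num, Real.Gamma_nat_eq_factorial]
    simp
  rw [h2] at h
  rw [← h]
  refine setIntegral_congr_fun measurableSet_Ioi fun x hx => ?_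
  rw [show (2:ℝ) - 1 = 1 by norm_num, Real.rpow_one]
  ring

lemma integral_mul_exp_neg_mul_Ioi {c : ℝ} (hc : 0 < c) :
    ∫ x in Ioi (0:ℝ), x * exp (-(c * x)) = (c⁻¹) ^ 2 := by
  have h := integral_comp_mul_left_Ioi (fun y => y * exp (-y)) 0 hc
  simp only [mul_zero, smul_eq_mul] at h
  have h2 : ∫ x in Ioi (0:ℝ), c * x * exp (-(c * x)) = c⁻¹ * ∫ x in Ioi (0:ℝ), x * exp (-x) := h
  rw [integral_mul_exp_neg_Ioi, mul_one] at h2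
  have h3 : ∫ x in Ioi (0:ℝ), c * (x * exp (-(c * x))) = c⁻¹ := by
    rw [← h2]; congr 1; funext x; ring_nf
  rw [integral_const_mul] at h3
  field_simp at h3 ⊢
  nlinarith [h3]

lemma laplace_expMeas (hμ : 0 < μ) {s : ℝ} (hs : 0 ≤ s) :
    ∫ x, exp (-(s * x)) ∂(expMeas μ) = (1 + s * μ)⁻¹ := by
  rw [integral_expMeas hμ]
  have hkey : ∀ x : ℝ, 1 / μ * exp (-(x / μ)) * exp (-(s * x))
      = 1 / μ * exp (-((s + 1 / μ) * x)) := by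
    intro x
    rw [mul_assoc, ← Real.exp_add]
    congr 2
    field_simp
    ring
  simp_rw [hkey]
  rw [integral_const_mul, integral_exp_neg_mul_Ioi (by positivity)]
  field_simp
  ring

lemma xlaplace_expMeas (hμ : 0 < μ) {s : ℝ} (hs : 0 ≤ s) :
    ∫ x, x * exp (-(s * x)) ∂(expMeas μ) = μ * ((1 + s * μ)⁻¹) ^ 2 := by
  rw [integral_expMeas hμ]
  have hkey : ∀ x : ℝ, 1 / μ * exp (-(x / μ)) * (x * exp (-(s * x)))
      = 1 / μ * (x * exp (-((s + 1 / μ) * x))) := by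
    intro x
    rw [show 1 / μ * exp (-(x / μ)) * (x * exp (-(s * x)))
        = 1 / μ * (x * (exp (-(x / μ)) * exp (-(s * x)))) by ring, ← Real.exp_add]
    congr 3
    field_simp
    ring
  simp_rw [hkey]
  rw [integral_const_mul, integral_mul_exp_neg_mul_Ioi (by positivity)]
  have h1 : (0:ℝ) < 1 + s * μ := by positivity
  field_simp
  ring

end ExpComp


section Transforms

variable {P : Measure ℝ} {μ : ℝ}

lemma laplace_conv [IsProbabilityMeasure P] (s : ℝ) :
    ∫ y, exp (-(s * y)) ∂(Measure.map (fun p : ℝ × ℝ => p.1 + p.2) (P.prod P))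
      = (∫ x, exp (-(s * x)) ∂P) ^ 2 := by
  rw [integral_map (by fun_prop : Measurable (fun p : ℝ × ℝ => p.1 + p.2)).aemeasurable
    (Continuous.aestronglyMeasurable (by continuity))]
  have hsplit : ∀ p : ℝ × ℝ, exp (-(s * (p.1 + p.2))) = exp (-(s * p.1)) * exp (-(s * p.2)) := by
    intro p; rw [← Real.exp_add]; ring_nf
  simp_rw [hsplit]
  rw [integral_prod_mul (f := fun x : ℝ => exp (-(s * x))) (g := fun y : ℝ => exp (-(s * y)))]
  ring

lemma integral_lengthBiased (hμ : 0 < μ) (hae : ∀ᵐ x ∂P, 0 ≤ x) (g : ℝ → ℝ) :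
    ∫ x, g x ∂(lengthBiased P μ) = ∫ x, (x / μ) * g x ∂P := by
  have hmeas : Measurable fun x : ℝ => (x / μ).toNNReal :=
    (measurable_id.div_const μ).real_toNNReal
  rw [lengthBiased, show (fun x : ℝ => ENNReal.ofReal (x / μ))
      = (fun x : ℝ => ((x / μ).toNNReal : ℝ≥0∞)) from rfl,
    integral_withDensity_eq_integral_smul hmeas g]
  refine integral_congr_ae ?_
  filter_upwards [hae] with x hx
  rw [NNReal.smul_def, Real.coe_toNNReal _ (by positivity), smul_eq_mul]

lemma isFiniteMeasure_lengthBiased [IsFiniteMeasure P] (hμ : 0 < μ)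
    (hint : Integrable (fun x => x) P) : IsFiniteMeasure (lengthBiased P μ) := by
  constructor
  rw [lengthBiased, withDensity_apply _ MeasurableSet.univ, Measure.restrict_univ]
  have hmono : ∫⁻ x, ENNReal.ofReal (x / μ) ∂P ≤ ∫⁻ x, ENNReal.ofReal (|x| / μ) ∂P :=
    lintegral_mono fun x => ENNReal.ofReal_le_ofReal
      (by gcongr; exact le_abs_self x)
  refine lt_of_le_of_lt hmono ?_
  have h2 : Integrable (fun x => |x| / μ) P := hint.abs.div_const μ
  rw [← ofReal_integral_eq_lintegral_ofReal h2 (Eventually.of_forall fun x => by positivity)]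
  exact ENNReal.ofReal_lt_top

lemma lengthBiased_Iio_zero (hμ : 0 < μ) (hF : P (Iio 0) = 0) :
    lengthBiased P μ (Iio 0) = 0 := by
  rw [lengthBiased, withDensity_apply _ measurableSet_Iio,
    Measure.restrict_eq_zero.2 hF]
  simp

end Transforms


section Aux
variable {F : Measure ℝ} {μ : ℝ}

lemma cont_exp_neg_mul (s : ℝ) : Continuous (fun x : ℝ => exp (-(s * x))) :=
  Real.continuous_exp.comp ((continuous_const.mul continuous_id).neg)

lemma cont_exp_neg_mul' (x : ℝ) : Continuous (fun s : ℝ => exp (-(s * x))) :=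
  Real.continuous_exp.comp ((continuous_id.mul continuous_const).neg)

lemma cont_mul_exp_neg_mul (s : ℝ) : Continuous (fun x : ℝ => x * exp (-(s * x))) :=
  continuous_id.mul (cont_exp_neg_mul s)

lemma ae_nonneg_of_Iio_s17 (hF : F (Iio 0) = 0) : ∀ᵐ x ∂F, 0 ≤ x := by
  rw [ae_iff]
  convert hF using 2
  ext x
  simp [not_le]

lemma integrable_exp_neg_smul [IsFiniteMeasure F] (hae : ∀ᵐ x ∂F, 0 ≤ x) {s : ℝ} (hs : 0 ≤ s) :
    Integrable (fun x => exp (-(s * x))) F := by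
  refine (integrable_const (1:ℝ)).mono' (cont_exp_neg_mul s).aestronglyMeasurable ?_
  filter_upwards [hae] with x hx
  rw [Real.norm_eq_abs, abs_of_pos (exp_pos _)]
  exact exp_le_one_iff.2 (by nlinarith)

lemma integrable_mul_exp_neg [IsFiniteMeasure F] (hae : ∀ᵐ x ∂F, 0 ≤ x)
    (hint : Integrable (fun x : ℝ => x) F) {s : ℝ} (hs : 0 ≤ s) :
    Integrable (fun x => x * exp (-(s * x))) F := by
  refine hint.abs.mono' (cont_mul_exp_neg_mul s).aestronglyMeasurable ?_
  filter_upwards [hae] with x hx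
  rw [Real.norm_eq_abs, abs_mul, abs_of_pos (exp_pos _)]
  calc |x| * exp (-(s * x)) ≤ |x| * 1 :=
        mul_le_mul_of_nonneg_left (exp_le_one_iff.2 (by nlinarith)) (abs_nonneg x)
    _ = |x| := mul_one _

end Aux

section ODE
variable {F : Measure ℝ} {μ : ℝ}

lemma laplace_eq_of_key [IsProbabilityMeasure F] (hae : ∀ᵐ x ∂F, 0 ≤ x) (hμ : 0 < μ)
    (hint : Integrable (fun x : ℝ => x) F)
    (key : ∀ s : ℝ, 0 ≤ s →
      (∫ x, exp (-(s * x)) ∂F) ^ 2 = μ⁻¹ * ∫ x, x * exp (-(s * x)) ∂F) :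
    ∀ s : ℝ, 0 ≤ s → ∫ x, exp (-(s * x)) ∂F = (1 + s * μ)⁻¹ := by
  set L : ℝ → ℝ := fun s => ∫ x, exp (-(s * x)) ∂F with hLdef
  set A : ℝ → ℝ := fun s => ∫ x, x * exp (-(s * x)) ∂F with hAdef
  have hLpos : ∀ s : ℝ, 0 ≤ s → 0 < L s := by
    intro s hs
    refine (integral_pos_iff_support_of_nonneg (fun x => (exp_pos _).le)
      (integrable_exp_neg_smul hae hs)).2 ?_
    have hsup : Function.support (fun x : ℝ => exp (-(s * x))) = univ := by
      ext x; simp [Function.mem_support, (exp_pos _).ne']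
    rw [hsup]
    simp
  have hderiv : ∀ s : ℝ, 0 < s → HasDerivAt L (-(A s)) s := by
    intro s hs
    have hball : ∀ t ∈ Metric.ball s (s / 2), (0:ℝ) < t := by
      intro t ht
      rw [Metric.mem_ball, Real.dist_eq] at ht
      rcases abs_lt.1 ht with ⟨h1, _⟩
      linarith
    have hder := hasDerivAt_integral_of_dominated_loc_of_deriv_le
      (F := fun (t : ℝ) (x : ℝ) => exp (-(t * x)))
      (F' := fun (t : ℝ) (x : ℝ) => -(x * exp (-(t * x)))) (μ := F)
      (bound := fun x => |x|) (Metric.ball_mem_nhds s (half_pos hs))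
      (Eventually.of_forall fun t => (cont_exp_neg_mul t).aestronglyMeasurable)
      (integrable_exp_neg_smul hae hs.le)
      ((cont_mul_exp_neg_mul s).neg.aestronglyMeasurable)
      ?_ hint.abs ?_
    · have hd := hder.2
      rwa [integral_neg] at hd
    · filter_upwards [hae] with x hx
      intro t ht
      rw [norm_neg, Real.norm_eq_abs, abs_mul, abs_of_pos (exp_pos _)]
      have ht0 : 0 < t := hball t ht
      calc |x| * exp (-(t * x)) ≤ |x| * 1 :=
            mul_le_mul_of_nonneg_left (exp_le_one_iff.2 (by nlinarith)) (abs_nonneg x)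
        _ = |x| := mul_one _
    · refine Eventually.of_forall fun x => fun t _ => ?_
      have h1 : HasDerivAt (fun t : ℝ => -(t * x)) (-x) t := (hasDerivAt_mul_const x).neg
      have h2 := (Real.hasDerivAt_exp (-(t * x))).comp t h1
      exact h2.congr_deriv (by ring)
  have hM : ∀ s : ℝ, 0 < s → HasDerivAt (fun t => (L t)⁻¹) μ s := by
    intro s hs
    have h1 := (hderiv s hs).inv (hLpos s hs.le).ne'
    have hA' : A s = μ * L s ^ 2 := by
      rw [key s hs.le, ← mul_assoc, mul_inv_cancel₀ hμ.ne', one_mul]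
    have h2 : -(-(A s)) / L s ^ 2 = μ := by
      rw [neg_neg, hA', mul_div_assoc, div_self (pow_ne_zero 2 (hLpos s hs.le).ne'), mul_one]
    rwa [h2] at h1
  have hL0 : L 0 = 1 := by
    rw [hLdef]
    simp
  have hcont0 : Tendsto L (𝓝[>] (0:ℝ)) (𝓝 1) := by
    have hDC := tendsto_integral_filter_of_dominated_convergence (μ := F)
      (l := 𝓝[>] (0:ℝ))
      (F := fun (s : ℝ) (x : ℝ) => exp (-(s * x))) (f := fun _ : ℝ => (1:ℝ))
      (bound := fun _ : ℝ => (1:ℝ))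
      (Eventually.of_forall fun s => (cont_exp_neg_mul s).aestronglyMeasurable)
      ?_ (integrable_const 1) ?_
    · simpa using hDC
    · filter_upwards [self_mem_nhdsWithin] with s hs
      filter_upwards [hae] with x hx
      rw [Real.norm_eq_abs, abs_of_pos (exp_pos _)]
      have : (0:ℝ) < s := hs
      exact exp_le_one_iff.2 (by nlinarith)
    · refine Eventually.of_forall fun x => ?_
      have hc : Tendsto (fun s : ℝ => exp (-(s * x))) (𝓝 0) (𝓝 (exp (-(0 * x)))) :=
        (cont_exp_neg_mul' x).tendsto 0
      simp only [zero_mul, neg_zero, Real.exp_zero] at hc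
      exact tendsto_nhdsWithin_of_tendsto_nhds hc
  have final : ∀ t : ℝ, 0 < t → (L t)⁻¹ = 1 + μ * t := by
    intro t ht
    set N : ℝ → ℝ := fun s => (L s)⁻¹ - μ * s with hNdef
    have hNd : ∀ s : ℝ, 0 < s → HasDerivAt N 0 s := by
      intro s hs
      have := (hM s hs).sub ((hasDerivAt_id s).const_mul μ)
      simp at this; exact this
    have hconst : ∀ ε ∈ Ioc (0:ℝ) t, N t = N ε := by
      intro ε hε
      have hcont : ContinuousOn N (Icc ε t) := fun x hx =>
        (hNd x (lt_of_lt_of_le hε.1 hx.1)).continuousAt.continuousWithinAt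
      exact constant_of_has_deriv_right_zero hcont (fun x hx =>
        (hNd x (lt_of_lt_of_le hε.1 hx.1)).hasDerivWithinAt) t (right_mem_Icc.2 hε.2)
    have h1 : Tendsto N (𝓝[>] (0:ℝ)) (𝓝 1) := by
      have hinv : Tendsto (fun ε => (L ε)⁻¹) (𝓝[>] (0:ℝ)) (𝓝 1) := by
        simpa using hcont0.inv₀ one_ne_zero
      have h2 : Tendsto (fun ε : ℝ => μ * ε) (𝓝[>] (0:ℝ)) (𝓝 0) := by
        have hc : Tendsto (fun ε : ℝ => μ * ε) (𝓝 0) (𝓝 (μ * 0)) :=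
          (continuous_const.mul continuous_id).tendsto 0
        rw [mul_zero] at hc
        exact tendsto_nhdsWithin_of_tendsto_nhds hc
      simpa using hinv.sub h2
    have h4 : N =ᶠ[𝓝[>] (0:ℝ)] fun _ => N t := by
      filter_upwards [Ioc_mem_nhdsGT_of_mem ⟨le_refl 0, ht⟩] with ε hε
      exact (hconst ε hε).symm
    have h5 : Tendsto (fun _ : ℝ => N t) (𝓝[>] (0:ℝ)) (𝓝 1) := h1.congr' h4
    have h6 : N t = 1 := tendsto_nhds_unique tendsto_const_nhds h5
    have : (L t)⁻¹ - μ * t = 1 := h6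
    linarith
  intro s hs
  rcases eq_or_lt_of_le hs with heq | hpos
  · rw [← heq]
    simp only [zero_mul, zero_add, inv_one]
    simpa using hL0
  · have hf := final s hpos
    have : (L s)⁻¹ = 1 + s * μ := by rw [hf]; ring
    rw [show L s = ∫ x, exp (-(s * x)) ∂F from rfl] at *
    rw [← this, inv_inv]

end ODE


/-- Example 1(a): for a probability distribution `F` on `[0,∞)` with mean `μ ∈ (0,∞)`,
the convolution `F ⋆ F` equals the length-biased distribution induced by `F` iff `F` is
the exponential distribution with mean `μ`. -/
theorem stmt17 (F : Measure ℝ) [IsProbabilityMeasure F] (hF : F (Set.Iio 0) = 0)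
    (μ : ℝ) (hμ : 0 < μ) (hint : Integrable (fun x => x) F) (hmean : (∫ x, x ∂F) = μ) :
    Measure.map (fun p : ℝ × ℝ => p.1 + p.2) (F.prod F) = lengthBiased F μ ↔
      F = expMeas μ := by
  have haeF : ∀ᵐ x ∂F, 0 ≤ x := ae_nonneg_of_Iio_s17 hF
  haveI hEP : IsProbabilityMeasure (expMeas μ) := isProbabilityMeasure_expMeas hμ
  have haeE : ∀ᵐ x ∂(expMeas μ), 0 ≤ x := ae_nonneg_of_Iio_s17 (expMeas_Iio hμ)
  constructor
  · intro h
    have key : ∀ s : ℝ, 0 ≤ s →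
        (∫ x, exp (-(s * x)) ∂F) ^ 2 = μ⁻¹ * ∫ x, x * exp (-(s * x)) ∂F := by
      intro s _
      have h1 := laplace_conv (P := F) s
      rw [h, integral_lengthBiased hμ haeF] at h1
      rw [← h1]
      have hpt : ∀ x : ℝ, x / μ * exp (-(s * x)) = μ⁻¹ * (x * exp (-(s * x))) :=
        fun x => by ring
      simp_rw [hpt]
      rw [integral_const_mul]
    have hLF := laplace_eq_of_key haeF hμ hint key
    refine laplace_unique F (expMeas μ) haeF haeE fun n => ?_
    rw [hLF n (Nat.cast_nonneg n), laplace_expMeas hμ (Nat.cast_nonneg n)]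
  · rintro rfl
    haveI : IsFiniteMeasure (lengthBiased (expMeas μ) μ) :=
      isFiniteMeasure_lengthBiased hμ hint
    haveI : IsProbabilityMeasure
        (Measure.map (fun p : ℝ × ℝ => p.1 + p.2) ((expMeas μ).prod (expMeas μ))) :=
      Measure.isProbabilityMeasure_map (measurable_fst.add measurable_snd).aemeasurable
    have hz1 : ((expMeas μ).prod (expMeas μ)) (Iio 0 ×ˢ univ) = 0 := by
      rw [Measure.prod_prod, expMeas_Iio hμ, zero_mul]
    have hz2 : ((expMeas μ).prod (expMeas μ)) (univ ×ˢ Iio 0) = 0 := by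
      rw [Measure.prod_prod, expMeas_Iio hμ, mul_zero]
    have hp1 : ∀ᵐ p : ℝ × ℝ ∂((expMeas μ).prod (expMeas μ)), 0 ≤ p.1 ∧ 0 ≤ p.2 := by
      rw [ae_iff]
      refine measure_mono_null (fun p hp => ?_) (measure_union_null hz1 hz2)
      simp only [mem_setOf_eq, not_and_or, not_le] at hp
      rcases hp with hp | hp
      · exact Set.mem_union_left _ ⟨hp, trivial⟩
      · exact Set.mem_union_right _ ⟨trivial, hp⟩
    refine laplace_unique _ _ ?_ ?_ ?_
    · refine (ae_map_iff (measurable_fst.add measurable_snd).aemeasurable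
        (measurableSet_Ici (a := (0:ℝ)))).mpr ?_
      filter_upwards [hp1] with p hp
      exact add_nonneg hp.1 hp.2
    · exact ae_nonneg_of_Iio_s17 (lengthBiased_Iio_zero hμ (expMeas_Iio hμ))
    · intro n
      rw [laplace_conv, integral_lengthBiased hμ haeE]
      have hpt : ∀ x : ℝ, x / μ * exp (-((n:ℝ) * x)) = μ⁻¹ * (x * exp (-((n:ℝ) * x))) :=
        fun x => by ring
      simp_rw [hpt]
      rw [integral_const_mul, xlaplace_expMeas hμ (Nat.cast_nonneg n),
        laplace_expMeas hμ (Nat.cast_nonneg n), ← mul_assoc, inv_mul_cancel₀ hμ.ne', one_mul]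
end

section
/- Let F be a probability distribution on [0,∞) with mean μ ∈ (0,∞) and let F_T be a probability distribution on [0,∞). Let Z be a random variable with the length-biased distribution F_Z induced by F, let T ∼ F_T, X ∼ F, with X, T, Z independent. Then the distributional equation Z =ᵈ X + T·Z holds (i.e., the distribution of X + T·Z equals F_Z) if and only if F̂(s) = exp(−σ(s)) for all s ≥ 0, where σ(s) = ∫₀^∞ (1 − F̂(ts))/t dF_T(t) with the integrand at t = 0 defined by continuity to equal μs. -/
open MeasureTheory

/-- `σ(s) = ∫₀^∞ (1 − F̂(ts))/t dF_T(t)`, with the integrand at `t = 0` equal to `μ s`. -/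
noncomputable def sigmaT (F FT : Measure ℝ) (μ : ℝ) (s : ℝ) : ℝ :=
  ∫ t, (if t = 0 then μ * s else (1 - LS F (t * s)) / t) ∂FT

open Set intervalIntegral


lemma bdd_integrable18 {P : Measure ℝ} [IsFiniteMeasure P] {f : ℝ → ℝ}
    (hm : AEStronglyMeasurable f P) {C : ℝ} (h : ∀ᵐ x ∂P, ‖f x‖ ≤ C) : Integrable f P :=
  (integrable_const C).mono' hm h

lemma laplace_ext18 (μ₁ μ₂ : Measure ℝ) [IsFiniteMeasure μ₁] [IsFiniteMeasure μ₂]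
    (h1 : μ₁ (Set.Iio 0) = 0) (h2 : μ₂ (Set.Iio 0) = 0)
    (h : ∀ s : ℝ, 0 ≤ s →
      ∫ x, Real.exp (-(s * x)) ∂μ₁ = ∫ x, Real.exp (-(s * x)) ∂μ₂) :
    μ₁ = μ₂ := by
  set e : ℝ → ℝ := fun x => Real.exp (-x) with he
  have he_cont : Continuous e := Real.continuous_exp.comp continuous_neg
  have he_meas : Measurable e := he_cont.measurable
  have he_inj : Function.Injective e := fun a b hab => by
    have : Real.exp (-a) = Real.exp (-b) := hab
    have := Real.exp_eq_exp.mp this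
    linarith
  have hemb : MeasurableEmbedding e := he_meas.measurableEmbedding he_inj
  set ν₁ : Measure ℝ := μ₁.map e with hν₁
  set ν₂ : Measure ℝ := μ₂.map e with hν₂
  have hν₁fin : IsFiniteMeasure ν₁ := ⟨by rw [hν₁, hemb.map_apply]; exact measure_lt_top _ _⟩
  have hν₂fin : IsFiniteMeasure ν₂ := ⟨by rw [hν₂, hemb.map_apply]; exact measure_lt_top _ _⟩
  -- supports
  have hsub : ∀ x : ℝ, e x ∉ Icc (0:ℝ) 1 → x < 0 := by
    intro x hx
    by_contra hge
    push_neg at hge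
    exact hx ⟨(Real.exp_pos _).le, by
      rw [show (1:ℝ) = Real.exp 0 by simp]
      exact Real.exp_le_exp.mpr (by linarith)⟩
  have hae₁ : ∀ᵐ y ∂ν₁, y ∈ Icc (0:ℝ) 1 := by
    rw [ae_iff, hν₁, hemb.map_apply]
    exact measure_mono_null (fun x hx => hsub x hx) h1
  have hae₂ : ∀ᵐ y ∂ν₂, y ∈ Icc (0:ℝ) 1 := by
    rw [ae_iff, hν₂, hemb.map_apply]
    exact measure_mono_null (fun x hx => hsub x hx) h2
  -- moments
  have hmom : ∀ n : ℕ, ∫ y, y ^ n ∂ν₁ = ∫ y, y ^ n ∂ν₂ := by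
    intro n
    rw [hν₁, hν₂, integral_map he_meas.aemeasurable (by fun_prop),
      integral_map he_meas.aemeasurable (by fun_prop)]
    have : ∀ x : ℝ, (e x) ^ n = Real.exp (-((n : ℝ) * x)) := by
      intro x
      rw [he]
      rw [← Real.exp_nat_mul]
      ring_nf
    simp_rw [this]
    exact h n (Nat.cast_nonneg n)
  -- equality of masses
  have hmass : μ₁ Set.univ = μ₂ Set.univ := by
    have h0 := h 0 le_rfl
    simp only [zero_mul, neg_zero, Real.exp_zero, MeasureTheory.integral_const, smul_eq_mul,
      mul_one] at h0
    exact (ENNReal.toReal_eq_toReal_iff' (measure_ne_top _ _) (measure_ne_top _ _)).mp h0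
  have hνmass : ν₁ Set.univ = ν₂ Set.univ := by
    rw [hν₁, hν₂, hemb.map_apply, hemb.map_apply, Set.preimage_univ, hmass]
  -- polynomial integrability
  have hpint : ∀ (q : Polynomial ℝ) (ν : Measure ℝ), IsFiniteMeasure ν →
      (∀ᵐ y ∂ν, y ∈ Icc (0:ℝ) 1) → Integrable (fun y => q.eval y) ν := by
    intro q ν hfin hae
    obtain ⟨C, hC⟩ := isCompact_Icc.exists_bound_of_continuousOn
      (f := fun y : ℝ => q.eval y) q.continuous.continuousOn
    exact bdd_integrable18 q.continuous.aestronglyMeasurable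
      (hae.mono fun y hy => hC y hy)
  -- polynomial integrals agree
  have hpeq : ∀ q : Polynomial ℝ, ∫ y, q.eval y ∂ν₁ = ∫ y, q.eval y ∂ν₂ := by
    intro q
    induction q using Polynomial.induction_on' with
    | add p q hp hq =>
      simp only [Polynomial.eval_add]
      rw [integral_add (hpint p ν₁ hν₁fin hae₁) (hpint q ν₁ hν₁fin hae₁),
        integral_add (hpint p ν₂ hν₂fin hae₂) (hpint q ν₂ hν₂fin hae₂), hp, hq]
    | monomial n a =>
      simp only [Polynomial.eval_monomial]
      rw [MeasureTheory.integral_const_mul, MeasureTheory.integral_const_mul, hmom n]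
  -- bounded continuous functions agree
  have hbcf : ∀ g : ℝ → ℝ, Continuous g → (∃ C : ℝ, ∀ x, ‖g x‖ ≤ C) →
      ∫ y, g y ∂ν₁ = ∫ y, g y ∂ν₂ := by
    intro g hg ⟨C, hC⟩
    set A := ∫ y, g y ∂ν₁ with hA
    set B := ∫ y, g y ∂ν₂ with hB
    set M : ℝ := (ν₁ Set.univ).toReal with hM
    have hMnn : 0 ≤ M := ENNReal.toReal_nonneg
    have gint₁ : Integrable g ν₁ := bdd_integrable18 hg.aestronglyMeasurable
      (Filter.Eventually.of_forall hC)
    have gint₂ : Integrable g ν₂ := bdd_integrable18 hg.aestronglyMeasurable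
      (Filter.Eventually.of_forall hC)
    have key : ∀ ε : ℝ, 0 < ε → |A - B| ≤ ε * (2 * M) := by
      intro ε hε
      set fc : C(Icc (0:ℝ) 1, ℝ) := ⟨fun y => g y, hg.comp continuous_subtype_val⟩ with hfc
      have hmem : fc ∈ closure ((polynomialFunctions (Icc (0:ℝ) 1) : Set C(Icc (0:ℝ) 1, ℝ))) := by
        have : fc ∈ (polynomialFunctions (Icc (0:ℝ) 1)).topologicalClosure := by
          rw [polynomialFunctions_closure_eq_top]; trivial
        exact this
      obtain ⟨p, hpmem, hdist⟩ := Metric.mem_closure_iff.mp hmem ε hε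
      rw [polynomialFunctions_coe] at hpmem
      obtain ⟨q, rfl⟩ := hpmem
      have happrox : ∀ y ∈ Icc (0:ℝ) 1, ‖g y - q.eval y‖ ≤ ε := by
        intro y hy
        have h1 : dist (fc ⟨y, hy⟩) ((Polynomial.toContinuousMapOnAlgHom (Icc (0:ℝ) 1)) q ⟨y, hy⟩)
            ≤ dist fc ((Polynomial.toContinuousMapOnAlgHom (Icc (0:ℝ) 1)) q) :=
          ContinuousMap.dist_apply_le_dist _
        have h2 : (Polynomial.toContinuousMapOnAlgHom (Icc (0:ℝ) 1)) q ⟨y, hy⟩ = q.eval y := rfl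
        rw [h2] at h1
        have h3 : fc ⟨y, hy⟩ = g y := rfl
        rw [h3] at h1
        rw [Real.norm_eq_abs, ← Real.dist_eq]
        exact h1.trans hdist.le
      have d1 : ‖A - ∫ y, q.eval y ∂ν₁‖ ≤ ε * M := by
        rw [hA, ← integral_sub gint₁ (hpint q ν₁ hν₁fin hae₁)]
        exact norm_integral_le_of_norm_le_const (hae₁.mono fun y hy => happrox y hy)
      have d2 : ‖B - ∫ y, q.eval y ∂ν₂‖ ≤ ε * M := by
        rw [hB, ← integral_sub gint₂ (hpint q ν₂ hν₂fin hae₂)]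
        have := norm_integral_le_of_norm_le_const (μ := ν₂)
          (f := fun y => g y - q.eval y) (hae₂.mono fun y hy => happrox y hy)
        rwa [measureReal_def, ← hνmass] at this
      calc |A - B| = |(A - ∫ y, q.eval y ∂ν₁) - (B - ∫ y, q.eval y ∂ν₂)| := by
            rw [hpeq q]; ring_nf
        _ ≤ ‖A - ∫ y, q.eval y ∂ν₁‖ + ‖B - ∫ y, q.eval y ∂ν₂‖ := abs_sub _ _
        _ ≤ ε * M + ε * M := add_le_add d1 d2
        _ = ε * (2 * M) := by ring
    have habs : |A - B| ≤ 0 := by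
      apply le_of_forall_pos_le_add
      intro ε hε
      rcases le_or_gt M 0 with hM0 | hM0
      · have := key 1 one_pos
        have : |A - B| ≤ 0 := by nlinarith
        linarith
      · have := key (ε / (2 * (2 * M))) (by positivity)
        calc |A - B| ≤ ε / (2 * (2 * M)) * (2 * M) := this
          _ = ε / 2 := by field_simp
          _ ≤ 0 + ε := by linarith
    have : A - B = 0 := by
      have := abs_nonneg (A - B)
      have : |A - B| = 0 := le_antisymm habs (abs_nonneg _)
      exact abs_eq_zero.mp this
    linarith
  -- conclude ν₁ = ν₂
  have hmap : ν₁ = ν₂ := by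
    apply ext_of_forall_lintegral_eq_of_IsFiniteMeasure
    intro f
    obtain ⟨C, hC⟩ := f.bounded
    have hfb : ∀ x : ℝ, ‖((f x : NNReal) : ℝ)‖ ≤ C + ((f 0 : NNReal) : ℝ) := by
      intro x
      have h1 := hC x 0
      rw [NNReal.dist_eq] at h1
      have h2 : ((f x : NNReal) : ℝ) - ((f 0 : NNReal) : ℝ) ≤ |((f x : NNReal) : ℝ) - ((f 0 : NNReal) : ℝ)| := le_abs_self _
      rw [Real.norm_of_nonneg (f x).coe_nonneg]
      linarith
    have hfc : Continuous fun x : ℝ => ((f x : NNReal) : ℝ) :=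
      NNReal.continuous_coe.comp f.continuous
    have int₁ : Integrable (fun x => ((f x : NNReal) : ℝ)) ν₁ :=
      bdd_integrable18 hfc.aestronglyMeasurable (Filter.Eventually.of_forall hfb)
    have int₂ : Integrable (fun x => ((f x : NNReal) : ℝ)) ν₂ :=
      bdd_integrable18 hfc.aestronglyMeasurable (Filter.Eventually.of_forall hfb)
    rw [lintegral_coe_eq_integral _ int₁, lintegral_coe_eq_integral _ int₂,
      hbcf _ hfc ⟨_, hfb⟩]
  -- conclude μ₁ = μ₂
  ext S hS
  have e1 : μ₁ S = ν₁ (e '' S) := by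
    rw [hν₁, hemb.map_apply, Set.preimage_image_eq _ he_inj]
  have e2 : μ₂ S = ν₂ (e '' S) := by
    rw [hν₂, hemb.map_apply, Set.preimage_image_eq _ he_inj]
  rw [e1, e2, hmap]


lemma bdd_integrable18' {P : Measure ℝ} [IsFiniteMeasure P] {f : ℝ → ℝ}
    (hm : AEStronglyMeasurable f P) {C : ℝ} (h : ∀ᵐ x ∂P, ‖f x‖ ≤ C) : Integrable f P :=
  (integrable_const C).mono' hm h

section GenericLS

variable (P : Measure ℝ)

/-- strong measurability of a parametric Laplace integral -/
lemma LS_sm18 [SFinite P] : StronglyMeasurable (fun s : ℝ => ∫ x, Real.exp (-(s * x)) ∂P) := by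
  apply MeasureTheory.StronglyMeasurable.integral_prod_right'
    (f := fun q : ℝ × ℝ => Real.exp (-(q.1 * q.2)))
  exact (Real.continuous_exp.comp (continuous_fst.mul continuous_snd).neg).stronglyMeasurable

variable [IsFiniteMeasure P] (hP : ∀ᵐ x ∂P, 0 ≤ x)
include hP

lemma LS_expbd18 {s : ℝ} (hs : 0 ≤ s) : ∀ᵐ x ∂P, ‖Real.exp (-(s * x))‖ ≤ 1 := by
  filter_upwards [hP] with x hx
  rw [Real.norm_eq_abs, abs_of_pos (Real.exp_pos _), show (1:ℝ) = Real.exp 0 by simp]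
  exact Real.exp_le_exp.mpr (by nlinarith)

lemma LS_int18 {s : ℝ} (hs : 0 ≤ s) : Integrable (fun x => Real.exp (-(s * x))) P :=
  bdd_integrable18' (Real.continuous_exp.comp (by fun_prop : Continuous fun x : ℝ => -(s*x))).aestronglyMeasurable (LS_expbd18 P hP hs)

lemma LS_bd18 {s : ℝ} (hs : 0 ≤ s) : ‖∫ x, Real.exp (-(s * x)) ∂P‖ ≤ (P Set.univ).toReal := by
  have := norm_integral_le_of_norm_le_const (μ := P) (LS_expbd18 P hP hs)
  rw [one_mul] at this; exact this

omit hP in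
lemma LS_nonneg18 {s : ℝ} : 0 ≤ ∫ x, Real.exp (-(s * x)) ∂P :=
  integral_nonneg fun x => (Real.exp_pos _).le

lemma LS_cont18 : ContinuousOn (fun s : ℝ => ∫ x, Real.exp (-(s * x)) ∂P) (Ici 0) := by
  apply continuousOn_of_dominated (bound := fun _ => (1:ℝ))
  · exact fun s _ => (Real.continuous_exp.comp (by fun_prop : Continuous fun x : ℝ => -(s*x))).aestronglyMeasurable
  · exact fun s hs => LS_expbd18 P hP hs
  · exact integrable_const 1
  · exact Filter.Eventually.of_forall fun x =>
      ((Real.continuous_exp.comp (by fun_prop : Continuous fun s : ℝ => -(s*x)))).continuousOn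

end GenericLS

/-- a.e. property of the first coordinate on a product -/
lemma ae_prod_fst18 {α β : Type*} [MeasurableSpace α] [MeasurableSpace β]
    (μ : Measure α) (ν : Measure β) [SFinite μ] [SFinite ν] {p : α → Prop}
    (h : ∀ᵐ x ∂μ, p x) : ∀ᵐ q ∂(μ.prod ν), p q.1 := by
  rw [ae_iff] at h ⊢
  have hz : μ.prod ν ({x | ¬ p x} ×ˢ (Set.univ : Set β)) = 0 := by
    rw [Measure.prod_prod, h, zero_mul]
  exact measure_mono_null (fun q hq => Set.mem_prod.mpr ⟨hq, Set.mem_univ _⟩) hz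

lemma ae_prod_snd18 {α β : Type*} [MeasurableSpace α] [MeasurableSpace β]
    (μ : Measure α) (ν : Measure β) [SFinite μ] [SFinite ν] {p : β → Prop}
    (h : ∀ᵐ x ∂ν, p x) : ∀ᵐ q ∂(μ.prod ν), p q.2 := by
  rw [ae_iff] at h ⊢
  have hz : μ.prod ν ((Set.univ : Set α) ×ˢ {x | ¬ p x}) = 0 := by
    rw [Measure.prod_prod, h, mul_zero]
  exact measure_mono_null (fun q hq => Set.mem_prod.mpr ⟨Set.mem_univ _, hq⟩) hz

lemma exp_norm_le18 {a b : ℝ} (ha : 0 ≤ a) (hb : 0 ≤ b) : ‖Real.exp (-(a * b))‖ ≤ 1 := by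
  rw [Real.norm_eq_abs, abs_of_pos (Real.exp_pos _), show (1:ℝ) = Real.exp 0 by simp]
  exact Real.exp_le_exp.mpr (by nlinarith)

lemma bdd_int18 {α : Type*} [MeasurableSpace α] {P : Measure α} [IsFiniteMeasure P] {f : α → ℝ}
    (hm : AEStronglyMeasurable f P) {C : ℝ} (h : ∀ᵐ x ∂P, ‖f x‖ ≤ C) : Integrable f P :=
  (integrable_const C).mono' hm h

section Main

variable (F FT : Measure ℝ) [IsProbabilityMeasure F] [IsProbabilityMeasure FT] (μ : ℝ)

noncomputable def gZ18 : ℝ → ℝ := fun s => ∫ z, Real.exp (-(s * z)) ∂(lengthBiased F μ)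

noncomputable def hZ18 : ℝ → ℝ := fun s => ∫ t, gZ18 F μ (t * s) ∂FT

lemma haeF18 (P : Measure ℝ) (hP : P (Set.Iio 0) = 0) : ∀ᵐ x ∂P, 0 ≤ x := by
  rw [ae_iff]
  convert hP using 2
  ext x
  simp [not_le]

lemma FZ_int_eq18 (hF : F (Set.Iio 0) = 0) (hμ : 0 < μ) (G : ℝ → ℝ) :
    ∫ z, G z ∂(lengthBiased F μ) = ∫ x, (x / μ) * G x ∂F := by
  rw [lengthBiased]
  have hrw : (fun x : ℝ => ENNReal.ofReal (x / μ)) =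
      fun x : ℝ => ((Real.toNNReal (x / μ) : NNReal) : ENNReal) := rfl
  have hmeas : Measurable fun x : ℝ => Real.toNNReal (x / μ) :=
    (by fun_prop : Measurable fun x : ℝ => x / μ).real_toNNReal
  rw [hrw, integral_withDensity_eq_integral_smul hmeas G]
  apply MeasureTheory.integral_congr_ae
  filter_upwards [haeF18 F hF] with x hx
  rw [NNReal.smul_def, Real.coe_toNNReal _ (div_nonneg hx hμ.le), smul_eq_mul]

lemma FZ_prob18 (hF : F (Set.Iio 0) = 0) (hμ : 0 < μ)
    (hint : Integrable (fun x => x) F) (hmean : (∫ x, x ∂F) = μ) :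
    IsProbabilityMeasure (lengthBiased F μ) := by
  constructor
  rw [lengthBiased, withDensity_apply _ MeasurableSet.univ, Measure.restrict_univ,
    ← ofReal_integral_eq_lintegral_ofReal (hint.div_const μ)
      ((haeF18 F hF).mono fun x hx => div_nonneg hx hμ.le),
    MeasureTheory.integral_div, hmean, div_self hμ.ne', ENNReal.ofReal_one]

lemma haeFZ18 (hF : F (Set.Iio 0) = 0) : ∀ᵐ z ∂(lengthBiased F μ), 0 ≤ z :=
  (withDensity_absolutelyContinuous F _).ae_le (haeF18 F hF)

lemma gZ_sm18 (hF : F (Set.Iio 0) = 0) (hμ : 0 < μ)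
    (hint : Integrable (fun x => x) F) (hmean : (∫ x, x ∂F) = μ) :
    StronglyMeasurable (gZ18 F μ) := by
  haveI := FZ_prob18 F μ hF hμ hint hmean
  exact LS_sm18 _

lemma gZ_cont18 (hF : F (Set.Iio 0) = 0) (hμ : 0 < μ)
    (hint : Integrable (fun x => x) F) (hmean : (∫ x, x ∂F) = μ) :
    ContinuousOn (gZ18 F μ) (Ici 0) := by
  haveI := FZ_prob18 F μ hF hμ hint hmean
  exact LS_cont18 _ (haeFZ18 F μ hF)

lemma gZ_bd18 (hF : F (Set.Iio 0) = 0) (hμ : 0 < μ)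
    (hint : Integrable (fun x => x) F) (hmean : (∫ x, x ∂F) = μ)
    {v : ℝ} (hv : 0 ≤ v) : ‖gZ18 F μ v‖ ≤ 1 := by
  haveI := FZ_prob18 F μ hF hμ hint hmean
  have := LS_bd18 (lengthBiased F μ) (haeFZ18 F μ hF) hv
  simpa [gZ18] using this

lemma gZ_zero18 (hF : F (Set.Iio 0) = 0) (hμ : 0 < μ)
    (hint : Integrable (fun x => x) F) (hmean : (∫ x, x ∂F) = μ) :
    gZ18 F μ 0 = 1 := by
  haveI := FZ_prob18 F μ hF hμ hint hmean
  simp [gZ18]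

lemma LS_zero18 : LS F 0 = 1 := by simp [LS]

/-- Formula A : the primitive of `gZ` equals `(1 - LS F s)/μ`. -/
lemma formulaA18 (hF : F (Set.Iio 0) = 0) (hμ : 0 < μ)
    (hint : Integrable (fun x => x) F) (hmean : (∫ x, x ∂F) = μ)
    {s : ℝ} (hs : 0 ≤ s) :
    ∫ u in (0:ℝ)..s, gZ18 F μ u = (1 - LS F s) / μ := by
  haveI := FZ_prob18 F μ hF hμ hint hmean
  haveI : IsFiniteMeasure (volume.restrict (Ioc (0:ℝ) s)) :=
    ⟨by rw [Measure.restrict_apply_univ]; exact measure_Ioc_lt_top⟩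
  have haeZ := haeFZ18 F μ hF
  have swap : ∫ u in (0:ℝ)..s, gZ18 F μ u
      = ∫ z, ∫ u in Ioc (0:ℝ) s, Real.exp (-(u * z)) ∂volume ∂(lengthBiased F μ) := by
    rw [intervalIntegral.integral_of_le hs]
    simp only [gZ18]
    apply integral_integral_swap
    apply bdd_int18 (C := 1)
    · exact ((Real.continuous_exp.comp
        (by fun_prop : Continuous fun q : ℝ × ℝ => -(q.1 * q.2)))).aestronglyMeasurable
    · filter_upwards [ae_prod_fst18 _ _ (ae_restrict_mem measurableSet_Ioc),
        ae_prod_snd18 _ _ haeZ] with q hq1 hq2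
      exact exp_norm_le18 hq1.1.le hq2
  rw [swap, FZ_int_eq18 F μ hF hμ]
  have hIz : ∀ x : ℝ, 0 ≤ x →
      (x / μ) * ∫ u in Ioc (0:ℝ) s, Real.exp (-(u * x)) ∂volume
        = (1 - Real.exp (-(s * x))) / μ := by
    intro x hx
    rcases eq_or_lt_of_le hx with hx0 | hx0
    · simp [← hx0]
    · rw [← intervalIntegral.integral_of_le hs]
      have hrw : ∀ u : ℝ, Real.exp (-(u * x)) = Real.exp ((-x) * u) := fun u => by ring_nf
      simp_rw [hrw]
      rw [integral_comp_mul_left (f := Real.exp) (by linarith : (-x) ≠ 0), integral_exp]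
      rw [smul_eq_mul]
      rw [mul_zero, Real.exp_zero]
      field_simp
      ring_nf
  have hcongr : ∫ x, (x / μ) * (∫ u in Ioc (0:ℝ) s, Real.exp (-(u * x)) ∂volume) ∂F
      = ∫ x, (1 - Real.exp (-(s * x))) / μ ∂F := by
    apply MeasureTheory.integral_congr_ae
    filter_upwards [haeF18 F hF] with x hx
    exact hIz x hx
  rw [hcongr]
  have haeF' := haeF18 F hF
  rw [MeasureTheory.integral_div, integral_sub (integrable_const 1) (LS_int18 F haeF' hs),
    MeasureTheory.integral_const, probReal_univ, one_smul]
  rfl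

end Main

section Main2

variable (F FT : Measure ℝ) [IsProbabilityMeasure F] [IsProbabilityMeasure FT] (μ : ℝ)

lemma hZ_sm18 (hF : F (Set.Iio 0) = 0) (hμ : 0 < μ)
    (hint : Integrable (fun x => x) F) (hmean : (∫ x, x ∂F) = μ) :
    StronglyMeasurable (hZ18 F FT μ) := by
  apply MeasureTheory.StronglyMeasurable.integral_prod_right'
    (f := fun q : ℝ × ℝ => gZ18 F μ (q.2 * q.1))
  exact (gZ_sm18 F μ hF hμ hint hmean).comp_measurable (measurable_snd.mul measurable_fst)

lemma hZ_cont18 (hF : F (Set.Iio 0) = 0) (hT : FT (Set.Iio 0) = 0) (hμ : 0 < μ)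
    (hint : Integrable (fun x => x) F) (hmean : (∫ x, x ∂F) = μ) :
    ContinuousOn (hZ18 F FT μ) (Ici 0) := by
  apply continuousOn_of_dominated (bound := fun _ => (1:ℝ))
  · exact fun s _ => ((gZ_sm18 F μ hF hμ hint hmean).comp_measurable
      (measurable_id.mul_const s)).aestronglyMeasurable
  · intro s hs
    filter_upwards [haeF18 FT hT] with t ht
    exact gZ_bd18 F μ hF hμ hint hmean (mul_nonneg ht hs)
  · exact integrable_const 1
  · filter_upwards [haeF18 FT hT] with t ht
    exact (gZ_cont18 F μ hF hμ hint hmean).comp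
      ((continuous_const.mul continuous_id).continuousOn)
      (fun s hs => mul_nonneg ht hs)

lemma hZ_bd18 (hF : F (Set.Iio 0) = 0) (hT : FT (Set.Iio 0) = 0) (hμ : 0 < μ)
    (hint : Integrable (fun x => x) F) (hmean : (∫ x, x ∂F) = μ)
    {s : ℝ} (hs : 0 ≤ s) : ‖hZ18 F FT μ s‖ ≤ 1 := by
  have h := norm_integral_le_of_norm_le_const (μ := FT)
    (f := fun t => gZ18 F μ (t * s)) (C := 1) ?_
  · simpa [hZ18] using h
  · filter_upwards [haeF18 FT hT] with t ht
    exact gZ_bd18 F μ hF hμ hint hmean (mul_nonneg ht hs)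

/-- Formula B : `sigmaT` is `μ` times the primitive of `hZ`. -/
lemma formulaB18 (hF : F (Set.Iio 0) = 0) (hT : FT (Set.Iio 0) = 0) (hμ : 0 < μ)
    (hint : Integrable (fun x => x) F) (hmean : (∫ x, x ∂F) = μ)
    {s : ℝ} (hs : 0 ≤ s) :
    sigmaT F FT μ s = μ * ∫ u in (0:ℝ)..s, hZ18 F FT μ u := by
  haveI : IsFiniteMeasure (volume.restrict (Ioc (0:ℝ) s)) :=
    ⟨by rw [Measure.restrict_apply_univ]; exact measure_Ioc_lt_top⟩
  have haeT := haeF18 FT hT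
  have swap : ∫ u in (0:ℝ)..s, hZ18 F FT μ u
      = ∫ t, ∫ u in Ioc (0:ℝ) s, gZ18 F μ (t * u) ∂volume ∂FT := by
    rw [intervalIntegral.integral_of_le hs]
    simp only [hZ18]
    apply integral_integral_swap
    apply bdd_int18 (C := 1)
    · exact ((gZ_sm18 F μ hF hμ hint hmean).comp_measurable
        (measurable_snd.mul measurable_fst)).aestronglyMeasurable
    · filter_upwards [ae_prod_fst18 _ _ (ae_restrict_mem measurableSet_Ioc),
        ae_prod_snd18 _ _ haeT] with q hq1 hq2
      exact gZ_bd18 F μ hF hμ hint hmean (mul_nonneg hq2 hq1.1.le)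
  rw [swap, ← MeasureTheory.integral_const_mul]
  apply MeasureTheory.integral_congr_ae
  filter_upwards [haeT] with t ht
  rcases eq_or_lt_of_le ht with ht0 | ht0
  · simp only [← ht0, if_pos rfl]
    have : ∀ u : ℝ, gZ18 F μ (0 * u) = 1 := fun u => by
      rw [zero_mul]; exact gZ_zero18 F μ hF hμ hint hmean
    simp only [this]
    rw [setIntegral_const]
    simp [Real.volume_Ioc, ENNReal.toReal_ofReal hs, hs]
  · rw [if_neg ht0.ne']
    rw [← intervalIntegral.integral_of_le hs,
      integral_comp_mul_left (f := gZ18 F μ) ht0.ne', mul_zero,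
      formulaA18 F μ hF hμ hint hmean (by positivity : (0:ℝ) ≤ t * s), smul_eq_mul]
    field_simp

/-- one-sided FTC for primitives of functions continuous on `[0, ∞)` -/
lemma primDeriv18 {f : ℝ → ℝ} (hsm : StronglyMeasurable f) (hc : ContinuousOn f (Ici 0))
    {b : ℝ} (hb : 0 ≤ b) :
    HasDerivWithinAt (fun s => ∫ u in (0:ℝ)..s, f u) (f b) (Ici b) b := by
  have hii : IntervalIntegrable f volume 0 b := by
    apply ContinuousOn.intervalIntegrable
    apply hc.mono
    rw [uIcc_of_le hb]
    exact fun y hy => hy.1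
  exact intervalIntegral.integral_hasDerivWithinAt_right hii
    hsm.stronglyMeasurableAtFilter
    ((hc b hb).mono (fun y (hy : y ∈ Ioi b) => le_trans hb hy.le))

lemma Phi_deriv18 (hF : F (Set.Iio 0) = 0) (hμ : 0 < μ)
    (hint : Integrable (fun x => x) F) (hmean : (∫ x, x ∂F) = μ)
    {b : ℝ} (hb : 0 ≤ b) :
    HasDerivWithinAt (LS F) (-(μ * gZ18 F μ b)) (Ici b) b := by
  have hd := ((primDeriv18 (gZ_sm18 F μ hF hμ hint hmean)
    (gZ_cont18 F μ hF hμ hint hmean) hb).const_mul μ).const_sub 1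
  apply hd.congr
  · intro y hy
    have hy0 : 0 ≤ y := le_trans hb hy
    rw [formulaA18 F μ hF hμ hint hmean hy0]
    field_simp
    ring
  · rw [formulaA18 F μ hF hμ hint hmean hb]
    field_simp
    ring

lemma sigma_deriv18 (hF : F (Set.Iio 0) = 0) (hT : FT (Set.Iio 0) = 0) (hμ : 0 < μ)
    (hint : Integrable (fun x => x) F) (hmean : (∫ x, x ∂F) = μ)
    {b : ℝ} (hb : 0 ≤ b) :
    HasDerivWithinAt (sigmaT F FT μ) (μ * hZ18 F FT μ b) (Ici b) b := by
  have hd := (primDeriv18 (hZ_sm18 F FT μ hF hμ hint hmean)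
    (hZ_cont18 F FT μ hF hT hμ hint hmean) hb).const_mul μ
  apply hd.congr
  · intro y hy
    exact formulaB18 F FT μ hF hT hμ hint hmean (le_trans hb hy)
  · exact formulaB18 F FT μ hF hT hμ hint hmean hb

lemma sigma_zero18 : sigmaT F FT μ 0 = 0 := by
  rw [sigmaT]
  have : ∀ t : ℝ, (if t = 0 then μ * 0 else (1 - LS F (t * 0)) / t) = 0 := by
    intro t
    rcases eq_or_ne t 0 with h | h
    · simp [h]
    · rw [if_neg h, mul_zero, LS_zero18]; simp
  simp only [this, MeasureTheory.integral_zero]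

lemma sigma_contOn18 (hF : F (Set.Iio 0) = 0) (hT : FT (Set.Iio 0) = 0) (hμ : 0 < μ)
    (hint : Integrable (fun x => x) F) (hmean : (∫ x, x ∂F) = μ)
    {s : ℝ} (hs : 0 ≤ s) :
    ContinuousOn (sigmaT F FT μ) (Icc 0 s) := by
  have hprim : ContinuousOn (fun x => μ * ∫ u in (0:ℝ)..x, hZ18 F FT μ u) (Icc 0 s) := by
    apply continuousOn_const.mul
    have hIcc : IntegrableOn (hZ18 F FT μ) (uIcc (0:ℝ) s) volume := by
      apply ContinuousOn.integrableOn_compact isCompact_uIcc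
      apply (hZ_cont18 F FT μ hF hT hμ hint hmean).mono
      rw [uIcc_of_le hs]
      exact fun y hy => hy.1
    have := intervalIntegral.continuousOn_primitive_interval (a := 0) (b := s)
      (f := hZ18 F FT μ) (μ := volume) hIcc
    rwa [uIcc_of_le hs] at this
  apply hprim.congr
  intro x hx
  exact formulaB18 F FT μ hF hT hμ hint hmean hx.1

end Main2

section Main3

variable (F FT : Measure ℝ) [IsProbabilityMeasure F] [IsProbabilityMeasure FT] (μ : ℝ)

lemma map_meas18 : Measurable (fun p : ℝ × ℝ × ℝ => p.1 + p.2.1 * p.2.2) := by fun_prop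

lemma LSmap18 (hF : F (Set.Iio 0) = 0) (hT : FT (Set.Iio 0) = 0) (hμ : 0 < μ)
    (hint : Integrable (fun x => x) F) (hmean : (∫ x, x ∂F) = μ)
    {s : ℝ} (hs : 0 ≤ s) :
    ∫ y, Real.exp (-(s * y)) ∂(Measure.map (fun p : ℝ × ℝ × ℝ => p.1 + p.2.1 * p.2.2)
        (F.prod (FT.prod (lengthBiased F μ))))
      = LS F s * hZ18 F FT μ s := by
  haveI := FZ_prob18 F μ hF hμ hint hmean
  set FZ := lengthBiased F μ with hFZ
  have haeT := haeF18 FT hT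
  have haeZ := haeFZ18 F μ hF
  have haeF' := haeF18 F hF
  have hasm : AEStronglyMeasurable (fun y : ℝ => Real.exp (-(s * y)))
      (Measure.map (fun p : ℝ × ℝ × ℝ => p.1 + p.2.1 * p.2.2) (F.prod (FT.prod FZ))) :=
    (Real.continuous_exp.comp (by fun_prop : Continuous fun y : ℝ => -(s * y))).aestronglyMeasurable
  rw [MeasureTheory.integral_map (map_meas18).aemeasurable hasm]
  have hint1 : Integrable (fun p : ℝ × ℝ × ℝ => Real.exp (-(s * (p.1 + p.2.1 * p.2.2))))
      (F.prod (FT.prod FZ)) := by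
    apply bdd_int18 (C := 1)
    · exact (Real.continuous_exp.comp
        (by fun_prop : Continuous fun p : ℝ × ℝ × ℝ => -(s * (p.1 + p.2.1 * p.2.2)))).aestronglyMeasurable
    · filter_upwards [ae_prod_fst18 _ _ haeF',
        ae_prod_snd18 _ _ (ae_prod_fst18 _ _ haeT),
        ae_prod_snd18 _ _ (ae_prod_snd18 _ _ haeZ)] with p h1 h2 h3
      exact exp_norm_le18 hs (by positivity)
  rw [MeasureTheory.integral_prod _ hint1]
  have hq : Integrable (fun q : ℝ × ℝ => Real.exp (-(s * (q.1 * q.2)))) (FT.prod FZ) := by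
    apply bdd_int18 (C := 1)
    · exact (Real.continuous_exp.comp
        (by fun_prop : Continuous fun q : ℝ × ℝ => -(s * (q.1 * q.2)))).aestronglyMeasurable
    · filter_upwards [ae_prod_fst18 _ _ haeT, ae_prod_snd18 _ _ haeZ] with q h1 h2
      exact exp_norm_le18 hs (by positivity)
  set c : ℝ := ∫ q : ℝ × ℝ, Real.exp (-(s * (q.1 * q.2))) ∂(FT.prod FZ) with hc
  have inner : ∀ x : ℝ, (∫ q : ℝ × ℝ, Real.exp (-(s * (x + q.1 * q.2))) ∂(FT.prod FZ))
      = Real.exp (-(s * x)) * c := by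
    intro x
    rw [hc, ← MeasureTheory.integral_const_mul]
    apply MeasureTheory.integral_congr_ae
    apply Filter.Eventually.of_forall
    intro q
    show Real.exp (-(s * (x + q.1 * q.2)))
      = Real.exp (-(s * x)) * Real.exp (-(s * (q.1 * q.2)))
    rw [← Real.exp_add]
    congr 1
    ring
  have houter : (∫ x, (∫ q : ℝ × ℝ, Real.exp (-(s * (x + q.1 * q.2))) ∂(FT.prod FZ)) ∂F)
      = (∫ x, Real.exp (-(s * x)) * c ∂F) :=
    MeasureTheory.integral_congr_ae (Filter.Eventually.of_forall inner)
  rw [houter, MeasureTheory.integral_mul_const]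
  have hcval : c = hZ18 F FT μ s := by
    rw [hc, MeasureTheory.integral_prod _ hq]
    have hg : ∀ t : ℝ, (∫ z, Real.exp (-(s * (t * z))) ∂FZ) = gZ18 F μ (t * s) := by
      intro t
      simp only [gZ18, ← hFZ]
      apply MeasureTheory.integral_congr_ae
      apply Filter.Eventually.of_forall
      intro z
      show Real.exp (-(s * (t * z))) = Real.exp (-(t * s * z))
      congr 1
      ring
    rw [MeasureTheory.integral_congr_ae (Filter.Eventually.of_forall hg)]
    rfl
  rw [hcval]
  rfl

end Main3

theorem stmt18_aux (F FT : Measure ℝ) [IsProbabilityMeasure F] [IsProbabilityMeasure FT]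
    (hF : F (Set.Iio 0) = 0) (hT : FT (Set.Iio 0) = 0)
    (μ : ℝ) (hμ : 0 < μ) (hint : Integrable (fun x => x) F) (hmean : (∫ x, x ∂F) = μ) :
    Measure.map (fun p : ℝ × ℝ × ℝ => p.1 + p.2.1 * p.2.2)
        (F.prod (FT.prod (lengthBiased F μ))) = lengthBiased F μ ↔
      ∀ s : ℝ, 0 ≤ s → LS F s = Real.exp (-(sigmaT F FT μ s)) := by
  haveI hFZprob := FZ_prob18 F μ hF hμ hint hmean
  constructor
  · intro heq s hs
    have hgφh : ∀ b : ℝ, 0 ≤ b → gZ18 F μ b = LS F b * hZ18 F FT μ b := by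
      intro b hb
      have h1 := LSmap18 F FT μ hF hT hμ hint hmean hb
      rw [heq] at h1
      exact h1
    set E : ℝ → ℝ := fun x => LS F x * Real.exp (sigmaT F FT μ x) with hE
    have hEconst : ∀ x ∈ Icc (0:ℝ) s, E x = E 0 := by
      apply constant_of_has_deriv_right_zero
      · apply ContinuousOn.mul
        · exact (LS_cont18 F (haeF18 F hF)).mono (fun y hy => hy.1)
        · exact Real.continuous_exp.comp_continuousOn
            (sigma_contOn18 F FT μ hF hT hμ hint hmean hs)
      · intro x hx
        have hx0 : 0 ≤ x := hx.1
        have dΦ := Phi_deriv18 F μ hF hμ hint hmean hx0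
        have dσ := (sigma_deriv18 F FT μ hF hT hμ hint hmean hx0).exp
        have dE := dΦ.mul dσ
        refine dE.congr_deriv ?_
        rw [hgφh x hx0]
        ring
    have h1 : E s = E 0 := hEconst s ⟨hs, le_rfl⟩
    have h2 : E 0 = 1 := by
      rw [hE]
      simp only [LS_zero18, sigma_zero18, Real.exp_zero, one_mul]
    have h3 : LS F s * Real.exp (sigmaT F FT μ s) = 1 := h1.trans h2
    rw [Real.exp_neg]
    exact eq_inv_of_mul_eq_one_left h3
  · intro hls
    have hgφh : ∀ b : ℝ, 0 ≤ b → gZ18 F μ b = LS F b * hZ18 F FT μ b := by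
      intro b hb
      have dΦ := Phi_deriv18 F μ hF hμ hint hmean hb
      have dexp : HasDerivWithinAt (fun y => Real.exp (-(sigmaT F FT μ y)))
          (Real.exp (-(sigmaT F FT μ b)) * (-(μ * hZ18 F FT μ b))) (Ici b) b :=
        ((sigma_deriv18 F FT μ hF hT hμ hint hmean hb).neg).exp
      have dΦ' : HasDerivWithinAt (LS F)
          (Real.exp (-(sigmaT F FT μ b)) * (-(μ * hZ18 F FT μ b))) (Ici b) b :=
        dexp.congr (fun y hy => hls y (le_trans hb hy)) (hls b hb)
      have e1 := dΦ.derivWithin (uniqueDiffOn_Ici b b Set.self_mem_Ici)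
      have e2 := dΦ'.derivWithin (uniqueDiffOn_Ici b b Set.self_mem_Ici)
      have e3 : -(μ * gZ18 F μ b) = Real.exp (-(sigmaT F FT μ b)) * (-(μ * hZ18 F FT μ b)) := by
        rw [← e1, ← e2]
      rw [← hls b hb] at e3
      have e4 : μ * (gZ18 F μ b - LS F b * hZ18 F FT μ b) = 0 := by linear_combination -e3
      rcases mul_eq_zero.mp e4 with h | h
      · exact absurd h hμ.ne'
      · linarith
    haveI : IsProbabilityMeasure (Measure.map (fun p : ℝ × ℝ × ℝ => p.1 + p.2.1 * p.2.2)
        (F.prod (FT.prod (lengthBiased F μ)))) :=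
      Measure.isProbabilityMeasure_map map_meas18.aemeasurable
    apply laplace_ext18
    · rw [Measure.map_apply map_meas18 measurableSet_Iio]
      have haem : ∀ᵐ p ∂(F.prod (FT.prod (lengthBiased F μ))), 0 ≤ p.1 + p.2.1 * p.2.2 := by
        filter_upwards [ae_prod_fst18 _ _ (haeF18 F hF),
          ae_prod_snd18 _ _ (ae_prod_fst18 _ _ (haeF18 FT hT)),
          ae_prod_snd18 _ _ (ae_prod_snd18 _ _ (haeFZ18 F μ hF))] with p h1 h2 h3
        positivity
      rw [ae_iff] at haem
      refine measure_mono_null (fun p hp => ?_) haem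
      simp only [Set.mem_setOf_eq, not_le]
      exact hp
    · exact withDensity_absolutelyContinuous F _ hF
    · intro s hs
      rw [LSmap18 F FT μ hF hT hμ hint hmean hs, ← hgφh s hs]
      rfl

/-- Example 2: for `X ∼ F`, `T ∼ F_T`, `Z ∼ F_Z` (length-biased, induced by `F`)
independent, the distributional equation `Z =ᵈ X + T·Z` holds (the pushforward of
`F ⊗ F_T ⊗ F_Z` under `(x,t,z) ↦ x + t·z` equals `F_Z`) iff `F̂(s) = exp(−σ(s))`
for all `s ≥ 0`. -/
theorem stmt18 (F FT : Measure ℝ) [IsProbabilityMeasure F] [IsProbabilityMeasure FT]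
    (hF : F (Set.Iio 0) = 0) (hT : FT (Set.Iio 0) = 0)
    (μ : ℝ) (hμ : 0 < μ) (hint : Integrable (fun x => x) F) (hmean : (∫ x, x ∂F) = μ) :
    Measure.map (fun p : ℝ × ℝ × ℝ => p.1 + p.2.1 * p.2.2)
        (F.prod (FT.prod (lengthBiased F μ))) = lengthBiased F μ ↔
      ∀ s : ℝ, 0 ≤ s → LS F s = Real.exp (-(sigmaT F FT μ s)) := by
  exact stmt18_aux F FT hF hT μ hμ hint hmean
end
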